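/- arXiv:2010.04540 — 14 statements merged into one kernel-verified Lean document; each statement's English description precedes it below -/
import Mathlib

section
/- Let X be a Banach space, let C ⊆ X be a convex set, let a ∈ X and r ≥ 0 with C ∩ B(a,r) ≠ ∅. Then for every s > 0 and every L > 1, one has (C + s·B) ∩ (B(a, Lr) + s·B) ⊆ C ∩ B(a, Lr) + θ(L)·s·B, where θ(L) = (3L+1)/(L−1) and B denotes the closed unit ball of X. -/
open Pointwise

/-- **Neighborhood of an intersection with a ball** (Proposition 2.3 of the paper, general
Banach case). If `C` is convex, `r ≥ 0` and `C ∩ B(a,r) ≠ ∅`, then for all `s > 0`, `L > 1`,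
`(C + s·B) ∩ (B(a,Lr) + s·B) ⊆ C ∩ B(a,Lr) + θ(L)·s·B` with `θ(L) = (3L+1)/(L-1)`. -/
theorem stmt_0 {X : Type*} [NormedAddCommGroup X] [NormedSpace ℝ X] [CompleteSpace X]
    (C : Set X) (hC : Convex ℝ C) (a : X) (r : ℝ) (hr : 0 ≤ r)
    (hne : (C ∩ Metric.closedBall a r).Nonempty)
    (s L : ℝ) (hs : 0 < s) (hL : 1 < L) :
    (C + Metric.closedBall (0 : X) s) ∩
        (Metric.closedBall a (L * r) + Metric.closedBall (0 : X) s) ⊆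
      (C ∩ Metric.closedBall a (L * r)) +
        Metric.closedBall (0 : X) ((3 * L + 1) / (L - 1) * s) := by
  obtain ⟨c₀, hc₀C, hc₀B⟩ := hne
  rintro x ⟨⟨c, hcC, u, hu, rfl⟩, hx2⟩
  obtain ⟨p, hp, v, hv, hpv⟩ := hx2
  rw [Metric.mem_closedBall, dist_zero_right] at hu hv
  rw [Metric.mem_closedBall] at hp hc₀B
  set d := (L - 1) * r + 2 * s with hd
  have hd0 : 0 < d := by nlinarith
  set t := 2 * s / d with ht
  have ht0 : 0 < t := by positivity
  have ht1 : t ≤ 1 := by rw [ht, div_le_one hd0]; nlinarith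
  have htd : t * d = 2 * s := by rw [ht, div_mul_cancel₀ _ hd0.ne']
  set y := (1 - t) • c + t • c₀ with hy
  have hyC : y ∈ C := hC hcC hc₀C (by linarith) ht0.le (by ring)
  have hca : ‖c - a‖ ≤ L * r + 2 * s := by
    have hpv' : p + v = c + u := hpv
    have h1 : ‖c + u - a‖ ≤ L * r + s := by
      rw [← hpv']
      calc ‖p + v - a‖ = ‖(p - a) + v‖ := by congr 1; abel
        _ ≤ ‖p - a‖ + ‖v‖ := norm_add_le _ _
        _ ≤ L * r + s := by rw [dist_eq_norm] at hp; linarith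
    calc ‖c - a‖ = ‖(c + u - a) - u‖ := by congr 1; abel
      _ ≤ ‖c + u - a‖ + ‖u‖ := norm_sub_le _ _
      _ ≤ L * r + 2 * s := by linarith
  have hc0a : ‖c₀ - a‖ ≤ r := by rw [dist_eq_norm] at hc₀B; exact hc₀B
  have hya : ‖y - a‖ ≤ L * r := by
    have he : y - a = (1 - t) • (c - a) + t • (c₀ - a) := by rw [hy]; module
    rw [he]
    calc ‖(1 - t) • (c - a) + t • (c₀ - a)‖ ≤ (1 - t) * ‖c - a‖ + t * ‖c₀ - a‖ := by
          refine (norm_add_le _ _).trans ?_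
          rw [norm_smul, norm_smul, Real.norm_of_nonneg (by linarith),
            Real.norm_of_nonneg ht0.le]
      _ ≤ (1 - t) * (L * r + 2 * s) + t * r := by
          have h1 : (1 - t) * ‖c - a‖ ≤ (1 - t) * (L * r + 2 * s) :=
            mul_le_mul_of_nonneg_left hca (by linarith)
          have h2 : t * ‖c₀ - a‖ ≤ t * r := mul_le_mul_of_nonneg_left hc0a ht0.le
          linarith
      _ ≤ L * r := by nlinarith
  have hxy : ‖c + u - y‖ ≤ (3 * L + 1) / (L - 1) * s := by
    have h1 : c + u - y = u + t • (c - c₀) := by rw [hy]; module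
    rw [h1]
    have h2 : ‖c - c₀‖ ≤ (L + 1) * r + 2 * s := by
      calc ‖c - c₀‖ = ‖(c - a) - (c₀ - a)‖ := by congr 1; abel
        _ ≤ ‖c - a‖ + ‖c₀ - a‖ := norm_sub_le _ _
        _ ≤ (L + 1) * r + 2 * s := by linarith
    calc ‖u + t • (c - c₀)‖ ≤ ‖u‖ + t * ‖c - c₀‖ := by
          refine (norm_add_le _ _).trans ?_
          rw [norm_smul, Real.norm_of_nonneg ht0.le]
      _ ≤ s + t * ((L + 1) * r + 2 * s) := by
          have := mul_le_mul_of_nonneg_left h2 ht0.le; linarith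
      _ ≤ (3 * L + 1) / (L - 1) * s := by
          rw [ht, div_mul_eq_mul_div, add_div' _ _ _ hd0.ne',
            show (3*L+1)/(L-1)*s = (3*L+1)*s/(L-1) from by ring,
            div_le_div_iff₀ hd0 (by linarith : (0:ℝ) < L - 1), hd]
          nlinarith [sq_nonneg s, mul_nonneg hs.le hr, mul_pos hs hs]
  exact ⟨y, ⟨hyC, Metric.mem_closedBall.mpr (by rw [dist_eq_norm]; exact hya)⟩,
    c + u - y, by rw [Metric.mem_closedBall, dist_zero_right]; exact hxy, by abel⟩
end

section
/- Let a, b ∈ ℝ² with a,b in the rectangular hull of a convex closed set A ⊆ ℝ² (distances measured in the sup norm ℓ²_∞). Then the metric projections satisfy ‖Pr(a;A) − Pr(b;A)‖ ≤ 2‖a − b‖. -/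
/-- A closed interval of `ℝ` (possibly unbounded): a closed order-connected set. -/
def IsClosedInterval (I : Set ℝ) : Prop := IsClosed I ∧ I.OrdConnected

/-- The rectangular hull of a set `A ⊆ ℝ²`: the intersection of all closed axis-parallel
rectangles containing `A`. Here `ℝ²` carries the sup norm (the `Pi` norm on `Fin 2 → ℝ`). -/
def rectHull (A : Set (Fin 2 → ℝ)) : Set (Fin 2 → ℝ) :=
  ⋂₀ {R : Set (Fin 2 → ℝ) |
      (∃ I₁ I₂ : Set ℝ, IsClosedInterval I₁ ∧ IsClosedInterval I₂ ∧
        R = {x | x 0 ∈ I₁ ∧ x 1 ∈ I₂}) ∧ A ⊆ R}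

lemma hull_coord (A : Set (Fin 2 → ℝ)) (x : Fin 2 → ℝ) (hx : x ∈ rectHull A)
    (i : Fin 2) (S : Set ℝ) (hS : IsClosedInterval S) (hsub : ∀ z ∈ A, z i ∈ S) :
    x i ∈ S := by
  have hi : i = 0 ∨ i = 1 := by fin_cases i <;> simp
  have huniv : IsClosedInterval (Set.univ : Set ℝ) := ⟨isClosed_univ, Set.ordConnected_univ⟩
  rcases hi with rfl | rfl
  · exact (hx _ ⟨⟨S, Set.univ, hS, huniv, rfl⟩, fun z hz => ⟨hsub z hz, trivial⟩⟩).1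
  · exact (hx _ ⟨⟨Set.univ, S, huniv, hS, rfl⟩, fun z hz => ⟨trivial, hsub z hz⟩⟩).2

lemma mid_lemma (A : Set (Fin 2 → ℝ)) (hconv : Convex ℝ A) (i : Fin 2) (c : ℝ)
    (z0 z1 : Fin 2 → ℝ) (h0 : z0 ∈ A) (h1 : z1 ∈ A) (hle : z0 i ≤ c) (hge : c ≤ z1 i) :
    ∃ w ∈ A, w i = c := by
  rcases eq_or_lt_of_le (hle.trans hge) with heq | hlt
  · exact ⟨z0, h0, by linarith⟩
  · set θ := (c - z0 i) / (z1 i - z0 i) with hθdef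
    have hd : 0 < z1 i - z0 i := by linarith
    have hθ0 : 0 ≤ θ := div_nonneg (by linarith) hd.le
    have hθ1 : θ ≤ 1 := (div_le_one hd).mpr (by linarith)
    refine ⟨(1 - θ) • z0 + θ • z1, hconv h0 h1 (by linarith) hθ0 (by ring), ?_⟩
    have h2 : ((1 - θ) • z0 + θ • z1) i = z0 i + θ * (z1 i - z0 i) := by
      simp [Pi.add_apply, Pi.smul_apply, smul_eq_mul]; ring
    have h3 : θ * (z1 i - z0 i) = c - z0 i := div_mul_cancel₀ _ hd.ne'
    rw [h2, h3]; ring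

lemma lemH (A : Set (Fin 2 → ℝ)) (hconv : Convex ℝ A) (hne : A.Nonempty)
    (x : Fin 2 → ℝ) (hx : x ∈ rectHull A) (i : Fin 2) (η : ℝ) (hη : 0 < η) :
    ∃ z ∈ A, |z i - x i| < η := by
  by_contra hcon
  push_neg at hcon
  have hmid : ∀ w ∈ A, w i ≠ x i := by
    intro w hw h
    have := hcon w hw
    rw [h] at this; simp at this; linarith
  have hside : (∀ z ∈ A, z i ≤ x i - η) ∨ (∀ z ∈ A, x i + η ≤ z i) := by
    by_contra hs
    push_neg at hs
    obtain ⟨⟨z1, hz1A, hz1⟩, ⟨z2, hz2A, hz2⟩⟩ := hs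
    have h1 : x i ≤ z1 i := by
      rcases le_abs'.mp (hcon z1 hz1A) with h | h <;> linarith
    have h2 : z2 i ≤ x i := by
      rcases le_abs'.mp (hcon z2 hz2A) with h | h <;> linarith
    obtain ⟨w, hwA, hwi⟩ := mid_lemma A hconv i (x i) z2 z1 hz2A hz1A h2 h1
    exact hmid w hwA hwi
  rcases hside with h | h
  · have := hull_coord A x hx i (Set.Iic (x i - η)) ⟨isClosed_Iic, Set.ordConnected_Iic⟩ h
    simp at this; linarith
  · have := hull_coord A x hx i (Set.Ici (x i + η)) ⟨isClosed_Ici, Set.ordConnected_Ici⟩ h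
    simp at this; linarith

lemma lemA (A : Set (Fin 2 → ℝ)) (hconv : Convex ℝ A) (hne : A.Nonempty)
    (x : Fin 2 → ℝ) (hx : x ∈ rectHull A) (q : Fin 2 → ℝ) (hq : q ∈ A)
    (hle : ∀ k, |x k - q k| ≤ Metric.infDist x A) :
    ∀ k, |x k - q k| = Metric.infDist x A := by
  intro k
  by_contra hne'
  have hlt : |x k - q k| < Metric.infDist x A := lt_of_le_of_ne (hle k) hne'
  have hr0 : 0 < Metric.infDist x A := lt_of_le_of_lt (abs_nonneg _) hlt
  obtain ⟨j, hjk, hcov⟩ : ∃ j : Fin 2, j ≠ k ∧ ∀ m : Fin 2, m = k ∨ m = j := by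
    fin_cases k
    · exact ⟨1, by decide, by decide⟩
    · exact ⟨0, by decide, by decide⟩
  have hdq : Metric.infDist x A ≤ dist x q := Metric.infDist_le_dist_of_mem hq
  have hmax : dist x q ≤ max |x k - q k| |x j - q j| := by
    rw [dist_pi_le_iff (le_max_iff.mpr (Or.inl (abs_nonneg _)))]
    intro m
    rcases hcov m with rfl | rfl
    · rw [Real.dist_eq]; exact le_max_left _ _
    · rw [Real.dist_eq]; exact le_max_right _ _
  have hj : |x j - q j| = Metric.infDist x A := by
    have hrm := hdq.trans hmax
    rcases le_or_gt (Metric.infDist x A) |x j - q j| with h | h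
    · exact le_antisymm (hle j) h
    · exact absurd hrm (not_le.mpr (max_lt hlt h))
  obtain ⟨z, hzA, hz⟩ := lemH A hconv hne x hx j _ hr0
  set μ := min 1 ((Metric.infDist x A - |x k - q k|) / (|z k - q k| + 1)) with hμdef
  have hD1 : (0:ℝ) < |z k - q k| + 1 := by positivity
  have hμ0 : 0 < μ := lt_min one_pos (div_pos (by linarith) hD1)
  have hμ1 : μ ≤ 1 := min_le_left _ _
  have hμ2 : μ * (|z k - q k| + 1) ≤ Metric.infDist x A - |x k - q k| :=
    (le_div_iff₀ hD1).mp (min_le_right _ _)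
  have hmem : (1 - μ) • q + μ • z ∈ A := hconv hq hzA (by linarith) hμ0.le (by ring)
  have hdist : dist x ((1 - μ) • q + μ • z) < Metric.infDist x A := by
    rw [dist_pi_lt_iff hr0]
    intro m
    have hcoord : x m - ((1 - μ) • q + μ • z) m = (x m - q m) - μ * (z m - q m) := by
      simp [Pi.add_apply, Pi.smul_apply, smul_eq_mul]; ring
    rw [Real.dist_eq, hcoord]
    rcases hcov m with rfl | rfl
    · calc |(x m - q m) - μ * (z m - q m)| ≤ |x m - q m| + μ * |z m - q m| := by
            have h1 := abs_add_le (x m - q m) (-(μ * (z m - q m)))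
            rw [abs_neg, abs_mul, abs_of_nonneg hμ0.le] at h1
            calc |(x m - q m) - μ * (z m - q m)|
                = |(x m - q m) + -(μ * (z m - q m))| := by ring_nf
              _ ≤ _ := h1
        _ < Metric.infDist x A := by nlinarith [abs_nonneg (z m - q m)]
    · have heq2 : (x m - q m) - μ * (z m - q m)
          = (1 - μ) * (x m - q m) + -(μ * (z m - x m)) := by ring
      rw [heq2]
      calc |(1 - μ) * (x m - q m) + -(μ * (z m - x m))|
          ≤ (1 - μ) * |x m - q m| + μ * |z m - x m| := by
            have h1 := abs_add_le ((1 - μ) * (x m - q m)) (-(μ * (z m - x m)))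
            rw [abs_neg, abs_mul, abs_mul, abs_of_nonneg (by linarith : (0:ℝ) ≤ 1 - μ),
              abs_of_nonneg hμ0.le] at h1
            exact h1
        _ < Metric.infDist x A := by
            rw [hj]; nlinarith [abs_nonneg (z m - x m)]
  exact absurd (Metric.infDist_le_dist_of_mem hmem) (not_le.mpr hdist)

lemma pick (r v w : ℝ) (hr : 0 < r) (hv : 0 < v) (hw : 0 ≤ w) :
    ∃ l : ℝ, 0 < l ∧ l ≤ 1 ∧ 0 < l * v ∧ l * v ≤ r ∧ l * w ≤ r := by
  set l := min 1 (min (r / v) (r / (w + 1))) with hl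
  have hw1 : (0:ℝ) < w + 1 := by linarith
  have hl0 : 0 < l := lt_min one_pos (lt_min (div_pos hr hv) (div_pos hr hw1))
  have hlv : l * v ≤ r := by
    have h1 : l ≤ r / v := le_trans (min_le_right _ _) (min_le_left _ _)
    calc l * v ≤ (r / v) * v := mul_le_mul_of_nonneg_right h1 hv.le
      _ = r := div_mul_cancel₀ r hv.ne'
  have hlw : l * w ≤ r := by
    have h1 : l ≤ r / (w + 1) := le_trans (min_le_right _ _) (min_le_right _ _)
    have h2 : l * (w + 1) ≤ r := by
      calc l * (w + 1) ≤ (r / (w + 1)) * (w + 1) := mul_le_mul_of_nonneg_right h1 hw1.le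
        _ = r := div_mul_cancel₀ r hw1.ne'
    nlinarith
  exact ⟨l, hl0, min_le_left _ _, mul_pos hl0 hv, hlv, hlw⟩

lemma step (A : Set (Fin 2 → ℝ)) (hconv : Convex ℝ A) (hne : A.Nonempty)
    (x : Fin 2 → ℝ) (hx : x ∈ rectHull A) (p q : Fin 2 → ℝ) (hp : p ∈ A) (hq : q ∈ A)
    (i j : Fin 2) (hij : ∀ k : Fin 2, k = i ∨ k = j)
    (lam : ℝ) (h0 : 0 ≤ lam) (h1 : lam ≤ 1)
    (hi : |x i - (p i + lam * (q i - p i))| < Metric.infDist x A)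
    (hj : |x j - (p j + lam * (q j - p j))| ≤ Metric.infDist x A) : False := by
  have hmem : (1 - lam) • p + lam • q ∈ A := hconv hp hq (by linarith) h0 (by ring)
  have hmk : ∀ k, ((1 - lam) • p + lam • q) k = p k + lam * (q k - p k) := by
    intro k; simp [Pi.add_apply, Pi.smul_apply, smul_eq_mul]; ring
  have hall : ∀ k, |x k - ((1 - lam) • p + lam • q) k| ≤ Metric.infDist x A := by
    intro k
    rcases hij k with rfl | rfl
    · rw [hmk]; exact hi.le
    · rw [hmk]; exact hj
  have := lemA A hconv hne x hx _ hmem hall i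
  rw [hmk] at this
  exact absurd this (ne_of_lt hi)

lemma keylem (A : Set (Fin 2 → ℝ)) (hconv : Convex ℝ A) (hne : A.Nonempty)
    (a b pa pb : Fin 2 → ℝ) (ha : a ∈ rectHull A) (hb : b ∈ rectHull A)
    (hpaA : pa ∈ A) (hpbA : pb ∈ A)
    (i j : Fin 2) (hij : ∀ k : Fin 2, k = i ∨ k = j)
    (t : ℝ)
    (hrpos : 0 < Metric.infDist a A) (hspos : 0 < Metric.infDist b A)
    (hai : pa i = a i + Metric.infDist a A) (hbi : pb i = b i - Metric.infDist b A)
    (haj : |pa j - a j| = Metric.infDist a A) (hbj : |pb j - b j| = Metric.infDist b A)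
    (hti : |a i - b i| ≤ t) (htj : |a j - b j| ≤ t) :
    a i - b i + Metric.infDist a A + Metric.infDist b A ≤ 2 * t := by
  set r := Metric.infDist a A with hrdef
  set s := Metric.infDist b A with hsdef
  clear_value r s
  by_contra hcon
  push_neg at hcon
  have hti' := abs_le.mp hti
  have htj' := abs_le.mp htj
  have ht0 : 0 ≤ t := (abs_nonneg _).trans hti
  set v := a i - b i + r + s with hvdef
  clear_value v
  have hv0 : 0 < v := by rw [hvdef]; linarith
  have hpbpai : pb i - pa i = -v := by rw [hai, hbi, hvdef]; ring
  have hpapbi : pa i - pb i = v := by linarith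
  rcases (abs_eq hrpos.le).mp haj with hαj | hαj
  · -- pa j = a j + r
    set w := a j - b j + r - (pb j - b j) with hwdef
    clear_value w
    have hpbpaj : pb j - pa j = -w := by rw [hwdef]; linarith
    rcases le_or_gt 0 w with hw | hw
    · obtain ⟨l, hl0, hl1, hlv0, hlv, hlw⟩ := pick r v w hrpos hv0 hw
      refine step A hconv hne a ha pa pb hpaA hpbA i j hij l hl0.le hl1 ?_ ?_
      · have he : a i - (pa i + l * (pb i - pa i)) = -r + l * v := by
          rw [hpbpai, hai]; ring
        rw [he, abs_lt]; constructor <;> linarith [hrdef, hsdef]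
      · have he : a j - (pa j + l * (pb j - pa j)) = -r + l * w := by
          rw [hpbpaj]; linarith
        rw [he, abs_le]
        constructor <;> linarith [hrdef, mul_nonneg hl0.le hw]
    · rcases (abs_eq hspos.le).mp hbj with hβj | hβj
      · -- pb j = b j + s : b-side contradiction
        have hnw0 : 0 ≤ -w := by linarith
        obtain ⟨l, hl0, hl1, hlv0, hlv, hlw⟩ := pick s v (-w) hspos hv0 hnw0
        have hlw' : -(l * w) ≤ s := by
          have : l * -w = -(l * w) := by ring
          linarith [this ▸ hlw]
        have hlw0 : 0 < -(l * w) := by nlinarith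
        refine step A hconv hne b hb pb pa hpbA hpaA i j hij l hl0.le hl1 ?_ ?_
        · have he : b i - (pb i + l * (pa i - pb i)) = s - l * v := by
            rw [hpapbi, hbi]; ring
          rw [he, abs_lt]; constructor <;> linarith [hrdef, hsdef]
        · have he : b j - (pb j + l * (pa j - pb j)) = -s - l * w := by
            have h2 : pa j - pb j = w := by linarith
            rw [h2]; linarith
          rw [he, abs_le]; constructor <;> linarith [hrdef, hsdef]
      · -- pb j = b j - s : direct contradiction, w = u_j + r + s < 0
        have : a j - b j + r + s < 0 := by rw [hwdef] at hw; linarith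
        linarith
  · -- pa j = a j - r
    set w := pb j - pa j with hwdef
    clear_value w
    rcases le_or_gt 0 w with hw | hw
    · obtain ⟨l, hl0, hl1, hlv0, hlv, hlw⟩ := pick r v w hrpos hv0 hw
      refine step A hconv hne a ha pa pb hpaA hpbA i j hij l hl0.le hl1 ?_ ?_
      · have he : a i - (pa i + l * (pb i - pa i)) = -r + l * v := by
          rw [hpbpai, hai]; ring
        rw [he, abs_lt]; constructor <;> linarith [hrdef, hsdef]
      · have he : a j - (pa j + l * (pb j - pa j)) = r - l * w := by
          rw [hwdef]; linarith
        rw [he, abs_le]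
        constructor <;> linarith [hrdef, mul_nonneg hl0.le hw]
    · rcases (abs_eq hspos.le).mp hbj with hβj | hβj
      · -- pb j = b j + s : direct contradiction, w = -u_j + r + s < 0
        have : -(a j - b j) + r + s < 0 := by rw [hwdef] at hw; linarith
        linarith
      · -- pb j = b j - s : b-side contradiction
        have hnw0 : 0 ≤ -w := by linarith
        obtain ⟨l, hl0, hl1, hlv0, hlv, hlw⟩ := pick s v (-w) hspos hv0 hnw0
        have hlw' : -(l * w) ≤ s := by
          have h3 : l * -w = -(l * w) := by ring
          linarith [h3 ▸ hlw]
        have hlw0 : 0 < -(l * w) := by nlinarith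
        refine step A hconv hne b hb pb pa hpbA hpaA i j hij l hl0.le hl1 ?_ ?_
        · have he : b i - (pb i + l * (pa i - pb i)) = s - l * v := by
            rw [hpapbi, hbi]; ring
          rw [he, abs_lt]; constructor <;> linarith [hrdef, hsdef]
        · have he : b j - (pb j + l * (pa j - pb j)) = s + l * w := by
            rw [hwdef]; linarith
          rw [he, abs_le]; constructor <;> linarith [hrdef, hsdef]

/-- **Lemma (LN-PR)**: if `a, b` belong to the rectangular hull of a convex closed set
`A ⊆ ℝ²` (sup norm), then the metric projections onto `A` satisfy
`‖Pr(a;A) − Pr(b;A)‖ ≤ 2‖a − b‖`. -/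
theorem stmt_1 (A : Set (Fin 2 → ℝ)) (hconv : Convex ℝ A) (hclosed : IsClosed A)
    (hne : A.Nonempty) (a b : Fin 2 → ℝ) (ha : a ∈ rectHull A) (hb : b ∈ rectHull A)
    (pa pb : Fin 2 → ℝ) (hpaA : pa ∈ A) (hpbA : pb ∈ A)
    (hpa : dist a pa = Metric.infDist a A) (hpb : dist b pb = Metric.infDist b A) :
    ‖pa - pb‖ ≤ 2 * ‖a - b‖ := by
  have hr0 : 0 ≤ Metric.infDist a A := Metric.infDist_nonneg
  have hs0 : 0 ≤ Metric.infDist b A := Metric.infDist_nonneg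
  have hd : dist a b = ‖a - b‖ := dist_eq_norm a b
  have hrs1 : Metric.infDist a A ≤ Metric.infDist b A + ‖a - b‖ := by
    have := Metric.infDist_le_infDist_add_dist (x := a) (y := b) (s := A)
    rwa [hd] at this
  have hrs2 : Metric.infDist b A ≤ Metric.infDist a A + ‖a - b‖ := by
    have := Metric.infDist_le_infDist_add_dist (x := b) (y := a) (s := A)
    rwa [dist_comm, hd] at this
  have hA : ∀ k, |a k - pa k| = Metric.infDist a A := by
    refine lemA A hconv hne a ha pa hpaA (fun k => ?_)
    rw [← Real.dist_eq]
    exact (dist_le_pi_dist a pa k).trans (le_of_eq hpa)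
  have hB : ∀ k, |b k - pb k| = Metric.infDist b A := by
    refine lemA A hconv hne b hb pb hpbA (fun k => ?_)
    rw [← Real.dist_eq]
    exact (dist_le_pi_dist b pb k).trans (le_of_eq hpb)
  have ht0 : (0:ℝ) ≤ ‖a - b‖ := norm_nonneg _
  have hu : ∀ m : Fin 2, |a m - b m| ≤ ‖a - b‖ := fun m => by
    have := norm_le_pi_norm (a - b) m
    rwa [Pi.sub_apply, Real.norm_eq_abs] at this
  refine (pi_norm_le_iff_of_nonneg (by positivity)).mpr (fun k => ?_)
  rw [Pi.sub_apply, Real.norm_eq_abs]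
  obtain ⟨j, hcov⟩ : ∃ j : Fin 2, ∀ m : Fin 2, m = k ∨ m = j := by
    fin_cases k
    exacts [⟨1, by decide⟩, ⟨0, by decide⟩]
  have huk := abs_le.mp (hu k)
  rcases eq_or_lt_of_le hr0 with hr | hr
  · -- infDist a A = 0
    have hak : pa k = a k := by
      have := (hA k); rw [← hr] at this; have := abs_eq_zero.mp this; linarith
    have hbk := abs_le.mp (le_of_eq (hB k))
    rw [abs_le]; constructor <;> linarith
  rcases eq_or_lt_of_le hs0 with hs | hs
  · have hbk : pb k = b k := by
      have := (hB k); rw [← hs] at this; have := abs_eq_zero.mp this; linarith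
    have hak := abs_le.mp (le_of_eq (hA k))
    rw [abs_le]; constructor <;> linarith
  rcases (abs_eq hr0).mp (hA k) with hak | hak <;> rcases (abs_eq hs0).mp (hB k) with hbk | hbk
  · -- pa k = a k - r, pb k = b k - s : same sign, easy
    rw [abs_le]; constructor <;> linarith
  · -- pa k = a k - r, pb k = b k + s : hard, swapped keylem
    have hkey := keylem A hconv hne b a pb pa hb ha hpbA hpaA k j hcov ‖a - b‖ hs hr
      (by linarith) (by linarith)
      (by rw [abs_sub_comm]; exact hB j) (by rw [abs_sub_comm]; exact hA j)
      (by rw [abs_sub_comm]; exact hu k) (by rw [abs_sub_comm]; exact hu j)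
    rw [abs_le]; constructor <;> linarith
  · -- pa k = a k + r, pb k = b k - s : hard, direct keylem
    have hkey := keylem A hconv hne a b pa pb ha hb hpaA hpbA k j hcov ‖a - b‖ hr hs
      (by linarith) (by linarith)
      (by rw [abs_sub_comm]; exact hA j) (by rw [abs_sub_comm]; exact hB j)
      (hu k) (hu j)
    rw [abs_le]; constructor <;> linarith
  · -- pa k = a k + r, pb k = b k + s : same sign, easy
    rw [abs_le]; constructor <;> linarith
end

section
/- Let A ⊆ ℝ² be a convex closed set and let a ∈ H[A], the rectangular hull of A, with a ∉ A. Then the metric projection of a onto A in the sup norm is a singleton, and this nearest point is a vertex of the square Q(a, dist(a,A)) = {y : ‖y−a‖_∞ ≤ dist(a,A)}. -/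
lemma rectHull_coord {A : Set (Fin 2 → ℝ)} {a : Fin 2 → ℝ} (ha : a ∈ rectHull A)
    (i : Fin 2) (I : Set ℝ) (hI : IsClosedInterval I) (h : ∀ x ∈ A, x i ∈ I) : a i ∈ I := by
  have hu : IsClosedInterval (Set.univ : Set ℝ) := ⟨isClosed_univ, Set.ordConnected_univ⟩
  fin_cases i
  · exact (ha {x | x 0 ∈ I ∧ x 1 ∈ Set.univ}
      ⟨⟨I, Set.univ, hI, hu, rfl⟩, fun x hx => ⟨h x hx, trivial⟩⟩).1
  · exact (ha {x | x 0 ∈ Set.univ ∧ x 1 ∈ I}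
      ⟨⟨Set.univ, I, hu, hI, rfl⟩, fun x hx => ⟨trivial, h x hx⟩⟩).2

lemma mySign_mul_self (x : ℝ) : Real.sign x * x = |x| := by
  rcases lt_trichotomy x 0 with h | h | h
  · rw [Real.sign_of_neg h, abs_of_neg h]; ring
  · simp [h]
  · rw [Real.sign_of_pos h, abs_of_pos h]; ring

lemma abs_mySign_le_one (x : ℝ) : |Real.sign x| ≤ 1 := by
  rcases lt_trichotomy x 0 with h | h | h
  · rw [Real.sign_of_neg h]; norm_num
  · simp [h]
  · rw [Real.sign_of_pos h]; norm_num

/-- **Lemma (WMP-S)**: let `A ⊆ ℝ²` (sup norm) be nonempty convex closed and let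
`a ∈ H[A] \ A`. Then the nearest point of `A` to `a` is unique, and every nearest point
is a vertex of the square `Q(a, dist(a,A))`, i.e. each of its coordinates equals
`a i ± dist(a,A)`. -/
theorem stmt_2 (A : Set (Fin 2 → ℝ)) (hconv : Convex ℝ A) (hclosed : IsClosed A)
    (hne : A.Nonempty) (a : Fin 2 → ℝ) (ha : a ∈ rectHull A) (haA : a ∉ A) :
    (∃! p, p ∈ A ∧ dist a p = Metric.infDist a A) ∧
      ∀ p, p ∈ A → dist a p = Metric.infDist a A →
        ∀ i : Fin 2, p i = a i + Metric.infDist a A ∨ p i = a i - Metric.infDist a A := by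
  set r := Metric.infDist a A with hrdef
  have hr : 0 < r := (hclosed.notMem_iff_infDist_pos hne).1 haA
  -- the open ball is disjoint from A
  have hdisj : Disjoint (Metric.ball a r) A := by
    rw [Set.disjoint_left]
    intro x hx hxA
    have h1 : dist x a < r := Metric.mem_ball.1 hx
    have h2 : r ≤ dist a x := Metric.infDist_le_dist_of_mem hxA
    rw [dist_comm] at h2
    linarith
  obtain ⟨f, u, hfu⟩ := geometric_hahn_banach_open (convex_ball a r) Metric.isOpen_ball hconv hdisj
  set α := f (Pi.single 0 1) with hα
  set β := f (Pi.single 1 1) with hβ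
  have hfx : ∀ x : Fin 2 → ℝ, f x = x 0 * α + x 1 * β := by
    intro x
    have hx : x = x 0 • (Pi.single 0 1 : Fin 2 → ℝ) + x 1 • (Pi.single 1 1 : Fin 2 → ℝ) := by
      funext j; fin_cases j <;> simp
    conv_lhs => rw [hx]
    rw [map_add, map_smul, map_smul, smul_eq_mul, smul_eq_mul, ← hα, ← hβ]
  -- the extreme point of the closed ball in direction (sign α, sign β)
  set s : Fin 2 → ℝ := fun i => if i = 0 then Real.sign α else Real.sign β with hs
  have hsnorm : ‖s‖ ≤ 1 := by
    rw [pi_norm_le_iff_of_nonneg (by norm_num)]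
    intro i
    fin_cases i <;> simp [hs, Real.norm_eq_abs, abs_mySign_le_one]
  have hkey : f a + r * (|α| + |β|) ≤ u := by
    have hmem : a + r • s ∈ Metric.closedBall a r := by
      rw [Metric.mem_closedBall, dist_eq_norm, add_sub_cancel_left, norm_smul,
        Real.norm_eq_abs, abs_of_pos hr]
      calc r * ‖s‖ ≤ r * 1 := mul_le_mul_of_nonneg_left hsnorm hr.le
        _ = r := mul_one r
    have hcl : ∀ x ∈ Metric.closedBall a r, f x ≤ u := by
      have h1 : Metric.closedBall a r = closure (Metric.ball a r) :=
        (closure_ball a hr.ne').symm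
      rw [h1]
      intro x hx
      have : closure (Metric.ball a r) ⊆ {y | f y ≤ u} := by
        apply closure_minimal
        · intro y hy; exact (hfu.1 y hy).le
        · exact isClosed_le f.continuous continuous_const
      exact this hx
    have hle := hcl _ hmem
    rw [map_add, map_smul, smul_eq_mul, hfx s] at hle
    have hsv : s 0 * α + s 1 * β = |α| + |β| := by
      simp only [hs]
      norm_num [mySign_mul_self]
    rwa [hsv] at hle
  have hfa : f a = a 0 * α + a 1 * β := hfx a
  -- neither α nor β can vanish
  have hαβ : α ≠ 0 ∧ β ≠ 0 := by
    constructor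
    · intro h0
      have hβ0 : β ≠ 0 := by
        intro hb0
        obtain ⟨b, hb⟩ := hne
        have h1 := hfu.2 b hb
        have h2 : a ∈ Metric.ball a r := Metric.mem_ball_self hr
        have h3 := hfu.1 a h2
        rw [hfx b, h0, hb0] at h1
        rw [hfx a, h0, hb0] at h3
        simp at h1 h3; linarith
      rcases hβ0.lt_or_gt with hneg | hpos
      · have : a 1 ∈ Set.Iic (a 1 - r) := by
          apply rectHull_coord ha 1 _ ⟨isClosed_Iic, Set.ordConnected_Iic⟩
          intro x hx
          have h1 := hfu.2 x hx
          rw [hfx x, h0] at h1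
          rw [hfa, h0, abs_of_neg hneg, abs_zero] at hkey
          simp only [Set.mem_Iic]
          nlinarith
        simp only [Set.mem_Iic] at this; linarith
      · have : a 1 ∈ Set.Ici (a 1 + r) := by
          apply rectHull_coord ha 1 _ ⟨isClosed_Ici, Set.ordConnected_Ici⟩
          intro x hx
          have h1 := hfu.2 x hx
          rw [hfx x, h0] at h1
          rw [hfa, h0, abs_of_pos hpos, abs_zero] at hkey
          simp only [Set.mem_Ici]
          nlinarith
        simp only [Set.mem_Ici] at this; linarith
    · intro h0
      have hα0 : α ≠ 0 := by
        intro hb0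
        obtain ⟨b, hb⟩ := hne
        have h1 := hfu.2 b hb
        have h2 : a ∈ Metric.ball a r := Metric.mem_ball_self hr
        have h3 := hfu.1 a h2
        rw [hfx b, h0, hb0] at h1
        rw [hfx a, h0, hb0] at h3
        simp at h1 h3; linarith
      rcases hα0.lt_or_gt with hneg | hpos
      · have : a 0 ∈ Set.Iic (a 0 - r) := by
          apply rectHull_coord ha 0 _ ⟨isClosed_Iic, Set.ordConnected_Iic⟩
          intro x hx
          have h1 := hfu.2 x hx
          rw [hfx x, h0] at h1
          rw [hfa, h0, abs_of_neg hneg, abs_zero] at hkey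
          simp only [Set.mem_Iic]
          nlinarith
        simp only [Set.mem_Iic] at this; linarith
      · have : a 0 ∈ Set.Ici (a 0 + r) := by
          apply rectHull_coord ha 0 _ ⟨isClosed_Ici, Set.ordConnected_Ici⟩
          intro x hx
          have h1 := hfu.2 x hx
          rw [hfx x, h0] at h1
          rw [hfa, h0, abs_of_pos hpos, abs_zero] at hkey
          simp only [Set.mem_Ici]
          nlinarith
        simp only [Set.mem_Ici] at this; linarith
  obtain ⟨hα0, hβ0⟩ := hαβ
  -- any nearest point has coordinates a i + sign * r
  have hnear : ∀ p, p ∈ A → dist a p = r →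
      p 0 = a 0 + Real.sign α * r ∧ p 1 = a 1 + Real.sign β * r := by
    intro p hp hdp
    have hub : ∀ i : Fin 2, |p i - a i| ≤ r := by
      intro i
      have h1 := dist_le_pi_dist p a i
      rw [Real.dist_eq] at h1
      rw [dist_comm] at hdp
      linarith [h1.trans_eq hdp]
    have hfp := hfu.2 p hp
    rw [hfx p] at hfp
    rw [hfa] at hkey
    have hsum : r * (|α| + |β|) ≤ α * (p 0 - a 0) + β * (p 1 - a 1) := by nlinarith
    have h0le : α * (p 0 - a 0) ≤ |α| * r := by
      calc α * (p 0 - a 0) ≤ |α * (p 0 - a 0)| := le_abs_self _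
        _ = |α| * |p 0 - a 0| := abs_mul _ _
        _ ≤ |α| * r := mul_le_mul_of_nonneg_left (hub 0) (abs_nonneg _)
    have h1le : β * (p 1 - a 1) ≤ |β| * r := by
      calc β * (p 1 - a 1) ≤ |β * (p 1 - a 1)| := le_abs_self _
        _ = |β| * |p 1 - a 1| := abs_mul _ _
        _ ≤ |β| * r := mul_le_mul_of_nonneg_left (hub 1) (abs_nonneg _)
    have he0 : α * (p 0 - a 0) = |α| * r := by nlinarith
    have he1 : β * (p 1 - a 1) = |β| * r := by nlinarith
    constructor
    · rcases hα0.lt_or_gt with h | h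
      · rw [abs_of_neg h] at he0; rw [Real.sign_of_neg h]
        have h2 : α * (p 0 - a 0) = α * (-r) := by linarith
        have := mul_left_cancel₀ hα0 h2
        linarith
      · rw [abs_of_pos h] at he0; rw [Real.sign_of_pos h]
        have h2 : α * (p 0 - a 0) = α * r := by linarith
        have := mul_left_cancel₀ hα0 h2
        linarith
    · rcases hβ0.lt_or_gt with h | h
      · rw [abs_of_neg h] at he1; rw [Real.sign_of_neg h]
        have h2 : β * (p 1 - a 1) = β * (-r) := by linarith
        have := mul_left_cancel₀ hβ0 h2
        linarith
      · rw [abs_of_pos h] at he1; rw [Real.sign_of_pos h]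
        have h2 : β * (p 1 - a 1) = β * r := by linarith
        have := mul_left_cancel₀ hβ0 h2
        linarith
  obtain ⟨p₀, hp₀A, hp₀d⟩ := hclosed.exists_infDist_eq_dist hne a
  refine ⟨⟨p₀, ⟨hp₀A, hp₀d.symm⟩, ?_⟩, ?_⟩
  · rintro q ⟨hqA, hqd⟩
    obtain ⟨hq0, hq1⟩ := hnear q hqA hqd
    obtain ⟨hp0, hp1⟩ := hnear p₀ hp₀A hp₀d.symm
    funext j; fin_cases j
    · show q 0 = p₀ 0; rw [hq0, hp0]
    · show q 1 = p₀ 1; rw [hq1, hp1]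
  · intro p hp hdp i
    obtain ⟨h0, h1⟩ := hnear p hp hdp
    fin_cases i
    · rcases hα0.lt_or_gt with h | h
      · right; show p 0 = a 0 - r; rw [h0, Real.sign_of_neg h]; ring
      · left; show p 0 = a 0 + r; rw [h0, Real.sign_of_pos h]; ring
    · rcases hβ0.lt_or_gt with h | h
      · right; show p 1 = a 1 - r; rw [h1, Real.sign_of_neg h]; ring
      · left; show p 1 = a 1 + r; rw [h1, Real.sign_of_pos h]; ring
end

section
/- Let A, B ⊆ ℝ² be convex closed sets with A ⊆ B, and let a ∈ H[A]. Then the sup-norm metric projection Pr(a;B) lies on the line segment [Pr(a;A), a], and ‖Pr(a;A) − Pr(a;B)‖_∞ = dist(a,A) − dist(a,B). -/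
lemma norm_fin2 (x : Fin 2 → ℝ) : ‖x‖ = max |x 0| |x 1| := by
  refine le_antisymm ?_ (max_le ?_ ?_)
  · refine (pi_norm_le_iff_of_nonneg (le_max_iff.mpr (Or.inl (abs_nonneg _)))).mpr ?_
    intro i
    fin_cases i
    · simpa [Real.norm_eq_abs] using le_max_left |x 0| |x 1|
    · simpa [Real.norm_eq_abs] using le_max_right |x 0| |x 1|
  · rw [← Real.norm_eq_abs]; exact norm_le_pi_norm x 0
  · rw [← Real.norm_eq_abs]; exact norm_le_pi_norm x 1

lemma key (T t β δ γ : ℝ) (hT : 0 < T) (ht : 0 < t) (hγ : γ < T) (hβ : |β| < t) :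
    ∃ θ : ℝ, 0 < θ ∧ θ ≤ 1 ∧ |(1-θ)*T + θ*γ| < T ∧ |(1-θ)*β + θ*δ| < t := by
  set θ := min (min (T/(T-γ)) ((t - |β|)/(|δ - β| + 1))) 1 with hθdef
  have h1 : 0 < T/(T-γ) := div_pos hT (by linarith)
  have h2 : 0 < (t - |β|)/(|δ - β| + 1) := div_pos (by linarith) (by positivity)
  have hθ0 : 0 < θ := lt_min (lt_min h1 h2) one_pos
  have hθ1 : θ ≤ 1 := min_le_right _ _
  have hha : θ * (T - γ) ≤ T := by
    have hle : θ ≤ T/(T-γ) := le_trans (min_le_left _ _) (min_le_left _ _)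
    exact (le_div_iff₀ (by linarith)).mp hle
  have hhb : θ * (|δ - β| + 1) ≤ t - |β| := by
    have hle : θ ≤ (t - |β|)/(|δ - β| + 1) := le_trans (min_le_left _ _) (min_le_right _ _)
    exact (le_div_iff₀ (by positivity)).mp hle
  refine ⟨θ, hθ0, hθ1, ?_, ?_⟩
  · rw [abs_lt]; constructor <;> nlinarith
  · have e1 : (1-θ)*β + θ*δ = β + θ*(δ - β) := by ring
    rw [e1]
    calc |β + θ*(δ-β)| ≤ |β| + |θ*(δ-β)| := abs_add_le _ _
      _ = |β| + θ*|δ-β| := by rw [abs_mul, abs_of_pos hθ0]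
      _ < t := by nlinarith [abs_nonneg (δ - β)]

lemma key2 (T γ0 γ1 : ℝ) (hT : 0 < T) (h0 : γ0 < T) (h1 : γ1 < T) :
    ∃ θ : ℝ, 0 < θ ∧ θ ≤ 1 ∧ |(1-θ)*T + θ*γ0| < T ∧ |(1-θ)*T + θ*γ1| < T := by
  set θ := min (min (T/(T-γ0)) (T/(T-γ1))) 1 with hθdef
  have ha0 : 0 < T/(T-γ0) := div_pos hT (by linarith)
  have ha1 : 0 < T/(T-γ1) := div_pos hT (by linarith)
  have hθ0 : 0 < θ := lt_min (lt_min ha0 ha1) one_pos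
  have hθ1 : θ ≤ 1 := min_le_right _ _
  have hb0 : θ * (T - γ0) ≤ T := by
    have hle : θ ≤ T/(T-γ0) := le_trans (min_le_left _ _) (min_le_left _ _)
    exact (le_div_iff₀ (by linarith)).mp hle
  have hb1 : θ * (T - γ1) ≤ T := by
    have hle : θ ≤ T/(T-γ1) := le_trans (min_le_left _ _) (min_le_right _ _)
    exact (le_div_iff₀ (by linarith)).mp hle
  exact ⟨θ, hθ0, hθ1, by rw [abs_lt]; constructor <;> nlinarith,
    by rw [abs_lt]; constructor <;> nlinarith⟩

lemma hull_lt (A : Set (Fin 2 → ℝ)) (a : Fin 2 → ℝ) (ha : a ∈ rectHull A)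
    (i : Fin 2) (ε : ℝ) (hε : 0 < ε) : ∃ u ∈ A, u i < a i + ε := by
  by_contra h
  push_neg at h
  fin_cases i
  · have hR : a ∈ {x : Fin 2 → ℝ | x 0 ∈ Set.Ici (a 0 + ε) ∧ x 1 ∈ (Set.univ : Set ℝ)} := by
      refine Set.mem_sInter.mp ha _ ⟨⟨Set.Ici (a 0 + ε), Set.univ,
        ⟨isClosed_Ici, Set.ordConnected_Ici⟩, ⟨isClosed_univ, Set.ordConnected_univ⟩, rfl⟩, ?_⟩
      exact fun u hu => ⟨h u hu, trivial⟩
    have h2 : a 0 + ε ≤ a 0 := hR.1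
    linarith
  · have hR : a ∈ {x : Fin 2 → ℝ | x 0 ∈ (Set.univ : Set ℝ) ∧ x 1 ∈ Set.Ici (a 1 + ε)} := by
      refine Set.mem_sInter.mp ha _ ⟨⟨Set.univ, Set.Ici (a 1 + ε),
        ⟨isClosed_univ, Set.ordConnected_univ⟩, ⟨isClosed_Ici, Set.ordConnected_Ici⟩, rfl⟩, ?_⟩
      exact fun u hu => ⟨trivial, h u hu⟩
    have h2 : a 1 + ε ≤ a 1 := hR.2
    linarith

lemma hull_gt (A : Set (Fin 2 → ℝ)) (a : Fin 2 → ℝ) (ha : a ∈ rectHull A)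
    (i : Fin 2) (ε : ℝ) (hε : 0 < ε) : ∃ u ∈ A, a i - ε < u i := by
  by_contra h
  push_neg at h
  fin_cases i
  · have hR : a ∈ {x : Fin 2 → ℝ | x 0 ∈ Set.Iic (a 0 - ε) ∧ x 1 ∈ (Set.univ : Set ℝ)} := by
      refine Set.mem_sInter.mp ha _ ⟨⟨Set.Iic (a 0 - ε), Set.univ,
        ⟨isClosed_Iic, Set.ordConnected_Iic⟩, ⟨isClosed_univ, Set.ordConnected_univ⟩, rfl⟩, ?_⟩
      exact fun u hu => ⟨h u hu, trivial⟩
    have h2 : a 0 ≤ a 0 - ε := hR.1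
    linarith
  · have hR : a ∈ {x : Fin 2 → ℝ | x 0 ∈ (Set.univ : Set ℝ) ∧ x 1 ∈ Set.Iic (a 1 - ε)} := by
      refine Set.mem_sInter.mp ha _ ⟨⟨Set.univ, Set.Iic (a 1 - ε),
        ⟨isClosed_univ, Set.ordConnected_univ⟩, ⟨isClosed_Iic, Set.ordConnected_Iic⟩, rfl⟩, ?_⟩
      exact fun u hu => ⟨trivial, h u hu⟩
    have h2 : a 1 ≤ a 1 - ε := hR.2
    linarith

lemma coord_bound (t θ pk ak uk xk : ℝ) (ht : 0 < t) (hpk : |pk - ak| = t)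
    (hx : xk - ak = (1-θ)*(pk - ak) + θ*(uk - ak))
    (hb : |(1-θ)*t^2 + θ*((pk - ak)*(uk - ak))| < t^2) : |xk - ak| < t := by
  have hsq : (pk - ak)^2 = t^2 := by rw [← sq_abs, hpk]
  have h1 : (pk - ak) * (xk - ak) = (1-θ)*t^2 + θ*((pk - ak)*(uk - ak)) := by
    rw [hx]; linear_combination (1-θ) * hsq
  have h2 : |pk - ak| * |xk - ak| < t^2 := by rw [← abs_mul, h1]; exact hb
  rw [hpk] at h2
  nlinarith [abs_nonneg (xk - ak)]

lemma corner (C : Set (Fin 2 → ℝ)) (hC : Convex ℝ C) (a p : Fin 2 → ℝ) (t : ℝ) (ht : 0 < t)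
    (hinf : t ≤ Metric.infDist a C) (hp : p ∈ C)
    (hd : max |p 0 - a 0| |p 1 - a 1| = t)
    (hwit : ∀ (i : Fin 2) (c : ℝ), |c| = t → ∃ u ∈ C, c * (u i - a i) < t ^ 2) :
    |p 0 - a 0| = t ∧ |p 1 - a 1| = t := by
  have haux : ∀ i j : Fin 2, (∀ y : Fin 2 → ℝ, ‖y‖ = max |y i| |y j|) →
      |p i - a i| = t → |p j - a j| < t → False := by
    intro i j hnorm hpi hpj
    obtain ⟨u, hu, huc⟩ := hwit i (p i - a i) hpi
    obtain ⟨θ, hθ0, hθ1, hbi, hbj⟩ := key (t^2) t (p j - a j) (u j - a j)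
      ((p i - a i) * (u i - a i)) (by positivity) ht huc hpj
    set x := (1-θ) • p + θ • u with hxdef
    have hx : x ∈ C := hC hp hu (by linarith) hθ0.le (by ring)
    have hxk : ∀ k, x k - a k = (1-θ)*(p k - a k) + θ*(u k - a k) := by
      intro k; simp [hxdef]; ring
    have hi' : |x i - a i| < t := coord_bound t θ (p i) (a i) (u i) (x i) ht hpi (hxk i) hbi
    have hj' : |x j - a j| < t := by rw [hxk j]; exact hbj
    have hlt : dist a x < t := by
      rw [dist_eq_norm, hnorm (a - x)]
      apply max_lt
      · rw [Pi.sub_apply, abs_sub_comm]; exact hi'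
      · rw [Pi.sub_apply, abs_sub_comm]; exact hj'
    have hle : Metric.infDist a C ≤ dist a x := Metric.infDist_le_dist_of_mem hx
    linarith
  have m0 : |p 0 - a 0| ≤ t := hd ▸ le_max_left _ _
  have m1 : |p 1 - a 1| ≤ t := hd ▸ le_max_right _ _
  rcases eq_or_lt_of_le m0 with h0|h0
  · refine ⟨h0, ?_⟩
    rcases eq_or_lt_of_le m1 with h1|h1
    · exact h1
    · exact absurd (haux 0 1 (fun y => norm_fin2 y) h0 h1) not_false
  · have h1 : |p 1 - a 1| = t := by
      rcases eq_or_lt_of_le m1 with h1|h1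
      · exact h1
      · exfalso; have := max_lt h0 h1; rw [hd] at this; exact lt_irrefl t this
    exact absurd (haux 1 0 (fun y => (norm_fin2 y).trans (max_comm _ _)) h1 h0) not_false

lemma quadrant (C : Set (Fin 2 → ℝ)) (hC : Convex ℝ C) (a p : Fin 2 → ℝ) (t : ℝ) (ht : 0 < t)
    (hinf : t ≤ Metric.infDist a C) (hp : p ∈ C)
    (hp0 : |p 0 - a 0| = t) (hp1 : |p 1 - a 1| = t)
    (w : Fin 2 → ℝ) (hw : w ∈ C) :
    t^2 ≤ (p 0 - a 0) * (w 0 - a 0) ∨ t^2 ≤ (p 1 - a 1) * (w 1 - a 1) := by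
  by_contra hcon
  push_neg at hcon
  obtain ⟨h0, h1⟩ := hcon
  obtain ⟨θ, hθ0, hθ1, hb0, hb1⟩ := key2 (t^2) ((p 0 - a 0)*(w 0 - a 0))
    ((p 1 - a 1)*(w 1 - a 1)) (by positivity) h0 h1
  set x := (1-θ) • p + θ • w with hxdef
  have hx : x ∈ C := hC hp hw (by linarith) hθ0.le (by ring)
  have hxk : ∀ k, x k - a k = (1-θ)*(p k - a k) + θ*(w k - a k) := by
    intro k; simp [hxdef]; ring
  have hi0 : |x 0 - a 0| < t := coord_bound t θ (p 0) (a 0) (w 0) (x 0) ht hp0 (hxk 0) hb0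
  have hi1 : |x 1 - a 1| < t := coord_bound t θ (p 1) (a 1) (w 1) (x 1) ht hp1 (hxk 1) hb1
  have hlt : dist a x < t := by
    rw [dist_eq_norm, norm_fin2]
    apply max_lt
    · rw [Pi.sub_apply, abs_sub_comm]; exact hi0
    · rw [Pi.sub_apply, abs_sub_comm]; exact hi1
  have hle : Metric.infDist a C ≤ dist a x := Metric.infDist_le_dist_of_mem hx
  linarith

set_option maxHeartbeats 1000000 in
/-- **Lemma (W-ABPR)**: let `A ⊆ B ⊆ ℝ²` (sup norm) be nonempty convex closed sets and
`a ∈ H[A]`. Then the sup-norm metric projection `Pr(a;B)` lies on the segment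
`[Pr(a;A), a]`, and `‖Pr(a;A) − Pr(a;B)‖ = dist(a,A) − dist(a,B)`. -/
theorem stmt_3 (A B : Set (Fin 2 → ℝ)) (hAconv : Convex ℝ A) (hAclosed : IsClosed A)
    (hAne : A.Nonempty) (hBconv : Convex ℝ B) (hBclosed : IsClosed B) (hAB : A ⊆ B)
    (a : Fin 2 → ℝ) (ha : a ∈ rectHull A)
    (pa pb : Fin 2 → ℝ) (hpaA : pa ∈ A) (hpbB : pb ∈ B)
    (hpa : dist a pa = Metric.infDist a A) (hpb : dist a pb = Metric.infDist a B) :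
    pb ∈ segment ℝ pa a ∧ ‖pa - pb‖ = Metric.infDist a A - Metric.infDist a B := by
  set r := Metric.infDist a A with hrdef
  set s := Metric.infDist a B with hsdef
  have hsr : s ≤ r := Metric.infDist_le_infDist_of_subset hAB hAne
  have hs0 : (0:ℝ) ≤ s := Metric.infDist_nonneg
  rcases eq_or_lt_of_le hs0 with hs|hs
  · -- s = 0 : pb = a
    have hpb0 : dist a pb = 0 := by rw [hpb, ← hs]
    have hpba : pb = a := (dist_eq_zero.mp hpb0).symm
    rw [hpba]
    refine ⟨right_mem_segment ℝ pa a, ?_⟩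
    have h1 : ‖pa - a‖ = dist a pa := by rw [dist_comm, dist_eq_norm]
    rw [h1, hpa, ← hs, sub_zero]
  · -- 0 < s
    have hr : 0 < r := lt_of_lt_of_le hs hsr
    have hwitA : ∀ (i : Fin 2) (c ε : ℝ), 0 < ε → |c| = r → ∃ u ∈ A, c * (u i - a i) < r * ε := by
      intro i c ε hε hc
      rcases (abs_eq hr.le).mp hc with rfl|rfl
      · obtain ⟨u, hu, hu'⟩ := hull_lt A a ha i ε hε
        exact ⟨u, hu, by nlinarith⟩
      · obtain ⟨u, hu, hu'⟩ := hull_gt A a ha i ε hε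
        exact ⟨u, hu, by nlinarith⟩
    have hdmax : ∀ q : Fin 2 → ℝ, dist a q = max |q 0 - a 0| |q 1 - a 1| := by
      intro q
      rw [dist_eq_norm, norm_fin2, Pi.sub_apply, Pi.sub_apply, abs_sub_comm (a 0),
        abs_sub_comm (a 1)]
    have hdA : max |pa 0 - a 0| |pa 1 - a 1| = r := by rw [← hdmax, hpa]
    have hdB : max |pb 0 - a 0| |pb 1 - a 1| = s := by rw [← hdmax, hpb]
    obtain ⟨hA0, hA1⟩ := corner A hAconv a pa r hr le_rfl hpaA hdA (by
      intro i c hc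
      obtain ⟨u, hu, hu'⟩ := hwitA i c r hr hc
      exact ⟨u, hu, by nlinarith⟩)
    obtain ⟨hB0, hB1⟩ := corner B hBconv a pb s hs le_rfl hpbB hdB (by
      intro i c hc
      rcases (abs_eq hs0).mp hc with rfl|rfl
      · obtain ⟨u, hu, hu'⟩ := hull_lt A a ha i s hs
        exact ⟨u, hAB hu, by nlinarith⟩
      · obtain ⟨u, hu, hu'⟩ := hull_gt A a ha i s hs
        exact ⟨u, hAB hu, by nlinarith⟩)
    have hc0 : r*(pb 0 - a 0) = s*(pa 0 - a 0) ∨ s*(pa 0 - a 0) + r*(pb 0 - a 0) = 0 := by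
      rcases (abs_eq hr.le).mp hA0 with h|h <;> rcases (abs_eq hs0).mp hB0 with h'|h' <;>
        rw [h, h']
      · left; ring
      · right; ring
      · right; ring
      · left; ring
    have hc1 : r*(pb 1 - a 1) = s*(pa 1 - a 1) ∨ s*(pa 1 - a 1) + r*(pb 1 - a 1) = 0 := by
      rcases (abs_eq hr.le).mp hA1 with h|h <;> rcases (abs_eq hs0).mp hB1 with h'|h' <;>
        rw [h, h']
      · left; ring
      · right; ring
      · right; ring
      · left; ring
    -- exclude the double-mismatch case
    have hXX : ¬ (s*(pa 0 - a 0) + r*(pb 0 - a 0) = 0 ∧ s*(pa 1 - a 1) + r*(pb 1 - a 1) = 0) := by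
      rintro ⟨h0, h1⟩
      have hco : (s/(r+s)) • pa + (r/(r+s)) • pb = a := by
        funext i
        have hi : s*(pa i - a i) + r*(pb i - a i) = 0 := by fin_cases i <;> assumption
        have hrs : r + s ≠ 0 := by positivity
        simp only [Pi.add_apply, Pi.smul_apply, smul_eq_mul]
        field_simp
        linarith
      have haB : a ∈ B := by
        rw [← hco]
        exact hBconv (hAB hpaA) hpbB (by positivity) (by positivity)
          (by rw [← add_div, add_comm]
              exact div_self (by positivity : (0:ℝ) < r + s).ne')
      have h2 : Metric.infDist a B ≤ dist a a := Metric.infDist_le_dist_of_mem haB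
      rw [dist_self] at h2
      linarith
    -- coordinate 0 match
    have hM0 : r*(pb 0 - a 0) = s*(pa 0 - a 0) := by
      rcases hc0 with h|h
      · exact h
      exfalso
      rcases hc1 with h1|h1
      · -- mismatch 0, match 1
        obtain ⟨v, hv, hv1⟩ := hwitA 1 (pa 1 - a 1) s hs hA1
        have hd1v : (pa 1 - a 1)*(v 1 - a 1) < r^2 := by nlinarith
        have hd0v : r^2 ≤ (pa 0 - a 0)*(v 0 - a 0) := by
          rcases quadrant A hAconv a pa r hr le_rfl hpaA hA0 hA1 v hv with h2|h2
          · exact h2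
          · linarith
        have he1v : (pb 1 - a 1)*(v 1 - a 1) < s^2 := by
          have hgt : s*((pa 1 - a 1)*(v 1 - a 1)) < s*(r*s) := mul_lt_mul_of_pos_left hv1 hs
          have hEq := congrArg (· * (v 1 - a 1)) h1
          have hrl : r*((pb 1 - a 1)*(v 1 - a 1)) < r*(s^2) := by nlinarith [hgt, hEq]
          exact lt_of_mul_lt_mul_left hrl hr.le
        have he0v : s^2 ≤ (pb 0 - a 0)*(v 0 - a 0) := by
          rcases quadrant B hBconv a pb s hs le_rfl hpbB hB0 hB1 v (hAB hv) with h2|h2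
          · exact h2
          · linarith
        have hV := congrArg (· * (v 0 - a 0)) h
        have hm1 : s*r^2 ≤ s*((pa 0 - a 0)*(v 0 - a 0)) :=
          mul_le_mul_of_nonneg_left hd0v hs0
        have hm2 : r*s^2 ≤ r*((pb 0 - a 0)*(v 0 - a 0)) :=
          mul_le_mul_of_nonneg_left he0v hr.le
        have hpos : (0:ℝ) < s*r^2 + r*s^2 := by positivity
        linarith [hV, hm1, hm2, hpos]
      · exact hXX ⟨h, h1⟩
    -- coordinate 1 match
    have hM1 : r*(pb 1 - a 1) = s*(pa 1 - a 1) := by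
      rcases hc1 with h|h
      · exact h
      exfalso
      obtain ⟨v, hv, hv0⟩ := hwitA 0 (pa 0 - a 0) s hs hA0
      have hd0v : (pa 0 - a 0)*(v 0 - a 0) < r^2 := by nlinarith
      have hd1v : r^2 ≤ (pa 1 - a 1)*(v 1 - a 1) := by
        rcases quadrant A hAconv a pa r hr le_rfl hpaA hA0 hA1 v hv with h2|h2
        · linarith
        · exact h2
      have he0v : (pb 0 - a 0)*(v 0 - a 0) < s^2 := by
        have hgt : s*((pa 0 - a 0)*(v 0 - a 0)) < s*(r*s) := mul_lt_mul_of_pos_left hv0 hs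
        have hEq := congrArg (· * (v 0 - a 0)) hM0
        have hrl : r*((pb 0 - a 0)*(v 0 - a 0)) < r*(s^2) := by nlinarith [hgt, hEq]
        exact lt_of_mul_lt_mul_left hrl hr.le
      have he1v : s^2 ≤ (pb 1 - a 1)*(v 1 - a 1) := by
        rcases quadrant B hBconv a pb s hs le_rfl hpbB hB0 hB1 v (hAB hv) with h2|h2
        · linarith
        · exact h2
      have hV := congrArg (· * (v 1 - a 1)) h
      have hm1 : s*r^2 ≤ s*((pa 1 - a 1)*(v 1 - a 1)) := mul_le_mul_of_nonneg_left hd1v hs0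
      have hm2 : r*s^2 ≤ r*((pb 1 - a 1)*(v 1 - a 1)) := mul_le_mul_of_nonneg_left he1v hr.le
      have hpos : (0:ℝ) < s*r^2 + r*s^2 := by positivity
      linarith [hV, hm1, hm2, hpos]
    have hMi : ∀ i : Fin 2, r*(pb i - a i) = s*(pa i - a i) := by
      intro i; fin_cases i <;> assumption
    constructor
    · -- segment membership
      have hco2 : (s/r) • pa + (1 - s/r) • a = pb := by
        funext i
        have hi := hMi i
        simp only [Pi.add_apply, Pi.smul_apply, smul_eq_mul]
        field_simp
        linarith
      exact ⟨s/r, 1 - s/r, by positivity,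
        by have := (div_le_one hr).mpr hsr; linarith, by ring, hco2⟩
    · -- norm equality
      have hnn : ∀ i : Fin 2, |pa i - pb i| = r - s := by
        intro i
        have hi := hMi i
        have hdi : |pa i - a i| = r := by fin_cases i <;> assumption
        have h2 : r*(pa i - pb i) = (r - s)*(pa i - a i) := by linear_combination -hi
        have h3 : |r| * |pa i - pb i| = |r - s| * |pa i - a i| := by
          rw [← abs_mul, ← abs_mul, h2]
        rw [abs_of_pos hr, abs_of_nonneg (by linarith : (0:ℝ) ≤ r - s), hdi] at h3
        have := mul_left_cancel₀ hr.ne' (h3.trans (mul_comm _ _))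
        exact this
      rw [norm_fin2]
      have e0 : (pa - pb) 0 = pa 0 - pb 0 := rfl
      have e1 : (pa - pb) 1 = pa 1 - pb 1 := rfl
      rw [e0, e1, hnn 0, hnn 1, max_self]
end

section
/- Let S ⊆ ℝ² be a convex compact nonempty set. Then the center of its rectangular hull H[S] belongs to S. -/
/-- **Lemma (CH-RH)**: the center of the rectangular hull of a nonempty convex compact set
`S ⊆ ℝ²` belongs to `S`. Writing `H[S] = [a₁,b₁] × [a₂,b₂]` with
`aᵢ = inf (Prjᵢ S)`, `bᵢ = sup (Prjᵢ S)`, the center is the point with coordinates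
`(aᵢ + bᵢ)/2`. -/
theorem stmt_4 (S : Set (Fin 2 → ℝ)) (hconv : Convex ℝ S) (hcomp : IsCompact S)
    (hne : S.Nonempty) :
    (fun i : Fin 2 =>
        (sInf ((fun p : Fin 2 → ℝ => p i) '' S) + sSup ((fun p : Fin 2 → ℝ => p i) '' S)) / 2)
      ∈ S := by
  set a : Fin 2 → ℝ := fun i => sInf ((fun p : Fin 2 → ℝ => p i) '' S) with ha
  set b : Fin 2 → ℝ := fun i => sSup ((fun p : Fin 2 → ℝ => p i) '' S) with hb
  have hKc : ∀ i : Fin 2, IsCompact ((fun p : Fin 2 → ℝ => p i) '' S) := fun i =>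
    hcomp.image (continuous_apply i)
  have hKne : ∀ i : Fin 2, ((fun p : Fin 2 → ℝ => p i) '' S).Nonempty := fun i =>
    hne.image _
  have hainS : ∀ i, ∃ P ∈ S, P i = a i := by
    intro i
    have := (hKc i).sInf_mem (hKne i)
    obtain ⟨P, hP, hPi⟩ := this
    exact ⟨P, hP, hPi⟩
  have hbinS : ∀ i, ∃ P ∈ S, P i = b i := by
    intro i
    have := (hKc i).sSup_mem (hKne i)
    obtain ⟨P, hP, hPi⟩ := this
    exact ⟨P, hP, hPi⟩
  have hla : ∀ i, ∀ x ∈ S, a i ≤ x i := by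
    intro i x hx
    exact csInf_le (hKc i).bddBelow ⟨x, hx, rfl⟩
  have hlb : ∀ i, ∀ x ∈ S, x i ≤ b i := by
    intro i x hx
    exact le_csSup (hKc i).bddAbove ⟨x, hx, rfl⟩
  by_contra hc
  obtain ⟨f, u, hfc, hfS⟩ :=
    geometric_hahn_banach_point_closed hconv hcomp.isClosed hc
  -- expand f on ℝ²
  set n0 : ℝ := f (Pi.single 0 1) with hn0def
  set n1 : ℝ := f (Pi.single 1 1) with hn1def
  have hf : ∀ y : Fin 2 → ℝ, f y = y 0 * n0 + y 1 * n1 := by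
    intro y
    have hy : y = y 0 • (Pi.single (0 : Fin 2) (1:ℝ) : Fin 2 → ℝ) + y 1 • (Pi.single (1 : Fin 2) (1:ℝ) : Fin 2 → ℝ) := by
      funext j
      fin_cases j <;> simp
    rw [hy]
    simp [map_add, map_smul, smul_eq_mul, hn0def, hn1def]
  obtain ⟨P, hPS, hP⟩ := hainS 0
  obtain ⟨Q, hQS, hQ⟩ := hbinS 0
  obtain ⟨R, hRS, hR⟩ := hainS 1
  obtain ⟨T, hTS, hT⟩ := hbinS 1
  have hfc' : f (fun i : Fin 2 => (a i + b i) / 2) < u := hfc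
  have key : ∀ y ∈ S, (a 0 + b 0)/2 * n0 + (a 1 + b 1)/2 * n1 < y 0 * n0 + y 1 * n1 := by
    intro y hy
    have h1 := hfS y hy
    have := hf (fun i : Fin 2 => (a i + b i) / 2)
    rw [hf y] at h1
    rw [this] at hfc'
    linarith
  have hP1 := hlb 1 P hPS
  have hP1' := hla 1 P hPS
  have hQ1 := hlb 1 Q hQS
  have hQ1' := hla 1 Q hQS
  have hR0 := hlb 0 R hRS
  have hR0' := hla 0 R hRS
  have hT0 := hlb 0 T hTS
  have hT0' := hla 0 T hTS
  have kP := key P hPS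
  have kQ := key Q hQS
  have kR := key R hRS
  have kT := key T hTS
  rw [hP] at kP; rw [hQ] at kQ; rw [hR] at kR; rw [hT] at kT
  rcases le_or_gt 0 n0 with h0 | h0 <;> rcases le_or_gt 0 n1 with h1 | h1
  · nlinarith [mul_nonneg h0 (sub_nonneg.2 hR0), mul_nonneg h1 (sub_nonneg.2 hP1)]
  · nlinarith [mul_nonneg h0 (sub_nonneg.2 hT0), mul_nonneg (le_of_lt (neg_pos.2 h1)) (sub_nonneg.2 hP1')]
  · nlinarith [mul_nonneg (le_of_lt (neg_pos.2 h0)) (sub_nonneg.2 hR0'), mul_nonneg h1 (sub_nonneg.2 hQ1)]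
  · nlinarith [mul_nonneg (le_of_lt (neg_pos.2 h0)) (sub_nonneg.2 hT0'), mul_nonneg (le_of_lt (neg_pos.2 h1)) (sub_nonneg.2 hQ1')]
end

section
/- Let 𝔠 be a family of nonempty convex closed subsets of ℝ², either finite or with at least one bounded member. If for every C₁, C₁', C₂, C₂' ∈ 𝔠 the projections onto the first coordinate axis satisfy Prj₁[C₁ ∩ C₁'] ∩ Prj₁[C₂ ∩ C₂'] ≠ ∅, then the whole family 𝔠 has a common point, and moreover Prj₁[⋂_{C∈𝔠} C] = ⋂_{C,C'∈𝔠} Prj₁[C ∩ C']. -/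
open Set Bornology

/-- One-dimensional Helly: a finite family of pairwise intersecting convex subsets of `ℝ`
has a common point. -/
lemma helly1 {ι : Type*} (s : Finset ι) (hs : s.Nonempty) (I : ι → Set ℝ)
    (hconv : ∀ i ∈ s, Convex ℝ (I i))
    (hpair : ∀ i ∈ s, ∀ j ∈ s, (I i ∩ I j).Nonempty) :
    ∃ x, ∀ i ∈ s, x ∈ I i := by
  classical
  choose! w hw using hpair
  set g : ι → ℝ := fun i => s.inf' hs (w i) with hg
  set x : ℝ := s.sup' hs g with hxdef
  refine ⟨x, fun k hk => ?_⟩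
  obtain ⟨i, hi, hix⟩ := Finset.exists_mem_eq_sup' hs g
  obtain ⟨j, hj, hjg⟩ := Finset.exists_mem_eq_inf' hs (w k)
  have h1 : x ≤ w i k := by
    rw [hxdef, hix]; exact Finset.inf'_le _ hk
  have h2 : w k j ≤ x := by
    have : g k ≤ x := Finset.le_sup' g hk
    rw [hg] at this; simpa [← hjg] using this
  have m1 : w k j ∈ I k := (hw k hk j hj).1
  have m2 : w i k ∈ I k := (hw i hi k hk).2
  exact (hconv k hk).ordConnected.out m1 m2 ⟨h2, h1⟩

lemma vec_eq (p : Fin 2 → ℝ) (x : ℝ) (hx : p 0 = x) : p = ![x, p 1] := by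
  funext i
  fin_cases i <;> simp [hx]

/-- Helly on a vertical line: if every pairwise intersection of members of `𝔡` contains a
point with first coordinate `x`, and `𝔡` is finite or has a bounded member, then there is a
common point with first coordinate `x`. -/
lemma lineHelly (𝔡 : Set (Set (Fin 2 → ℝ)))
    (hconv : ∀ C ∈ 𝔡, Convex ℝ C) (hcl : ∀ C ∈ 𝔡, IsClosed C)
    (hfb : 𝔡.Finite ∨ ∃ C ∈ 𝔡, IsBounded C) (x : ℝ)
    (hx : ∀ C ∈ 𝔡, ∀ C' ∈ 𝔡, ∃ p, p ∈ C ∩ C' ∧ p 0 = x) :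
    ∃ p : Fin 2 → ℝ, p 0 = x ∧ ∀ C ∈ 𝔡, p ∈ C := by
  classical
  set I : Set (Fin 2 → ℝ) → Set ℝ := fun C => {y | ![x, y] ∈ C} with hI
  have hIconv : ∀ C ∈ 𝔡, Convex ℝ (I C) := by
    intro C hC y₁ h₁ y₂ h₂ a b ha hb hab
    have : (![x, a • y₁ + b • y₂] : Fin 2 → ℝ) = a • ![x, y₁] + b • ![x, y₂] := by
      funext i
      fin_cases i <;> simp [smul_eq_mul]
      linear_combination (-x) * hab
    show ![x, a • y₁ + b • y₂] ∈ C
    rw [this]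
    exact hconv C hC h₁ h₂ ha hb hab
  have hIcl : ∀ C ∈ 𝔡, IsClosed (I C) := by
    intro C hC
    have hcont : Continuous fun y : ℝ => ![x, y] := by
      apply continuous_pi
      intro i
      fin_cases i <;> simp [continuous_const, continuous_id']
    exact (hcl C hC).preimage hcont
  have hIpair : ∀ C ∈ 𝔡, ∀ C' ∈ 𝔡, (I C ∩ I C').Nonempty := by
    intro C hC C' hC'
    obtain ⟨p, hp, hp0⟩ := hx C hC C' hC'
    refine ⟨p 1, ?_, ?_⟩
    · show ![x, p 1] ∈ C
      rw [← vec_eq p x hp0]; exact hp.1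
    · show ![x, p 1] ∈ C'
      rw [← vec_eq p x hp0]; exact hp.2
  suffices h : ∃ y, ∀ C ∈ 𝔡, y ∈ I C by
    obtain ⟨y, hy⟩ := h
    exact ⟨![x, y], by simp, fun C hC => hy C hC⟩
  rcases Set.eq_empty_or_nonempty 𝔡 with h𝔡 | ⟨C₁, hC₁⟩
  · exact ⟨0, by simp [h𝔡]⟩
  rcases hfb with hfin | ⟨C₀, hC₀, hbdd⟩
  · obtain ⟨y, hy⟩ := helly1 hfin.toFinset ⟨C₁, hfin.mem_toFinset.2 hC₁⟩ I
      (fun C hC => hIconv C (hfin.mem_toFinset.1 hC))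
      (fun C hC C' hC' => hIpair C (hfin.mem_toFinset.1 hC) C' (hfin.mem_toFinset.1 hC'))
    exact ⟨y, fun C hC => hy C (hfin.mem_toFinset.2 hC)⟩
  · have hIbdd : IsBounded (I C₀) := by
      obtain ⟨R, hR⟩ := isBounded_iff_forall_norm_le.1 hbdd
      refine isBounded_iff_forall_norm_le.2 ⟨R, fun y hy => ?_⟩
      have h1 : ‖(![x, y] : Fin 2 → ℝ) 1‖ ≤ ‖![x, y]‖ := norm_le_pi_norm _ 1
      simpa using h1.trans (hR _ hy)
    have hcomp : IsCompact (I C₀) :=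
      Metric.isCompact_of_isClosed_isBounded (hIcl C₀ hC₀) hIbdd
    have key : (I C₀ ∩ ⋂ c : ↥𝔡, I c.1).Nonempty := by
      refine hcomp.inter_iInter_nonempty (fun c : ↥𝔡 => I c.1)
        (fun c => hIcl c.1 c.2) (fun u => ?_)
      classical
      obtain ⟨y, hy⟩ := helly1 (insert (⟨C₀, hC₀⟩ : ↥𝔡) u) ⟨_, Finset.mem_insert_self _ _⟩
        (fun c : ↥𝔡 => I c.1) (fun c _ => hIconv c.1 c.2)
        (fun c _ c' _ => hIpair c.1 c.2 c'.1 c'.2)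
      exact ⟨y, hy _ (Finset.mem_insert_self _ _),
        Set.mem_iInter₂.2 fun c hc => hy c (Finset.mem_insert_of_mem hc)⟩
    obtain ⟨y, -, hy⟩ := key
    rw [Set.mem_iInter] at hy
    exact ⟨y, fun C hC => hy ⟨C, hC⟩⟩

/-- Finite case of the main theorem: a finite family satisfying the projection condition has
a common point. -/
lemma finHelly (𝔡 : Set (Set (Fin 2 → ℝ))) (hfin : 𝔡.Finite)
    (hconv : ∀ C ∈ 𝔡, Convex ℝ C) (hcl : ∀ C ∈ 𝔡, IsClosed C)
    (hproj : ∀ C₁ ∈ 𝔡, ∀ C₁' ∈ 𝔡, ∀ C₂ ∈ 𝔡, ∀ C₂' ∈ 𝔡,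
      ((fun p : Fin 2 → ℝ => p 0) '' (C₁ ∩ C₁') ∩
        (fun p : Fin 2 → ℝ => p 0) '' (C₂ ∩ C₂')).Nonempty) :
    (⋂₀ 𝔡).Nonempty := by
  classical
  rcases Set.eq_empty_or_nonempty 𝔡 with rfl | ⟨C₁, hC₁⟩
  · simp
  set J : Set (Fin 2 → ℝ) × Set (Fin 2 → ℝ) → Set ℝ :=
    fun P => (fun p : Fin 2 → ℝ => p 0) '' (P.1 ∩ P.2) with hJ
  have hlin : IsLinearMap ℝ (fun p : Fin 2 → ℝ => p 0) := ⟨fun p q => rfl, fun c p => rfl⟩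
  obtain ⟨x, hx⟩ := helly1 (hfin.toFinset ×ˢ hfin.toFinset)
    ⟨(C₁, C₁), Finset.mem_product.2 ⟨hfin.mem_toFinset.2 hC₁, hfin.mem_toFinset.2 hC₁⟩⟩ J
    (fun P hP => by
      rw [Finset.mem_product] at hP
      exact ((hconv _ (hfin.mem_toFinset.1 hP.1)).inter
        (hconv _ (hfin.mem_toFinset.1 hP.2))).is_linear_image hlin)
    (fun P hP Q hQ => by
      rw [Finset.mem_product] at hP hQ
      exact hproj _ (hfin.mem_toFinset.1 hP.1) _ (hfin.mem_toFinset.1 hP.2)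
        _ (hfin.mem_toFinset.1 hQ.1) _ (hfin.mem_toFinset.1 hQ.2))
  have hx' : ∀ C ∈ 𝔡, ∀ C' ∈ 𝔡, ∃ p, p ∈ C ∩ C' ∧ p 0 = x := by
    intro C hC C' hC'
    have := hx (C, C') (Finset.mem_product.2 ⟨hfin.mem_toFinset.2 hC, hfin.mem_toFinset.2 hC'⟩)
    obtain ⟨p, hp, hpx⟩ := this
    exact ⟨p, hp, hpx⟩
  obtain ⟨p, -, hp⟩ := lineHelly 𝔡 hconv hcl (Or.inl hfin) x hx'
  exact ⟨p, Set.mem_sInter.2 hp⟩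

/-- **Proposition (PR-PR), a Helly-type theorem in the plane**: let `𝔠` be a family of
nonempty convex closed subsets of `ℝ²`, either finite or containing a bounded member.
If `Prj₁[C₁ ∩ C₁'] ∩ Prj₁[C₂ ∩ C₂'] ≠ ∅` for all `C₁, C₁', C₂, C₂' ∈ 𝔠`, then the family
has a common point and `Prj₁[⋂ 𝔠] = ⋂_{C,C'∈𝔠} Prj₁[C ∩ C']`. -/
theorem stmt_5 (𝔠 : Set (Set (Fin 2 → ℝ)))
    (hne : ∀ C ∈ 𝔠, C.Nonempty) (hconv : ∀ C ∈ 𝔠, Convex ℝ C) (hcl : ∀ C ∈ 𝔠, IsClosed C)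
    (hfb : 𝔠.Finite ∨ ∃ C ∈ 𝔠, Bornology.IsBounded C)
    (hproj : ∀ C₁ ∈ 𝔠, ∀ C₁' ∈ 𝔠, ∀ C₂ ∈ 𝔠, ∀ C₂' ∈ 𝔠,
      ((fun p : Fin 2 → ℝ => p 0) '' (C₁ ∩ C₁') ∩
        (fun p : Fin 2 → ℝ => p 0) '' (C₂ ∩ C₂')).Nonempty) :
    (⋂₀ 𝔠).Nonempty ∧
      (fun p : Fin 2 → ℝ => p 0) '' (⋂₀ 𝔠) =
        ⋂ C ∈ 𝔠, ⋂ C' ∈ 𝔠, (fun p : Fin 2 → ℝ => p 0) '' (C ∩ C') := by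
  classical
  constructor
  · rcases hfb with hfin | ⟨C₀, hC₀, hbdd⟩
    · exact finHelly 𝔠 hfin hconv hcl hproj
    · have hcomp : IsCompact C₀ :=
        Metric.isCompact_of_isClosed_isBounded (hcl _ hC₀) hbdd
      have key : (C₀ ∩ ⋂ c : ↥𝔠, c.1).Nonempty := by
        refine hcomp.inter_iInter_nonempty (fun c : ↥𝔠 => c.1)
          (fun c => hcl c.1 c.2) (fun u => ?_)
        set 𝔡 : Set (Set (Fin 2 → ℝ)) := insert C₀ ((↑) '' (↑u : Set ↥𝔠)) with h𝔡
        have hsub : 𝔡 ⊆ 𝔠 := by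
          rw [h𝔡]
          apply Set.insert_subset hC₀
          rintro C ⟨c, -, rfl⟩
          exact c.2
        have hfin : 𝔡.Finite := (u.finite_toSet.image _).insert C₀
        obtain ⟨p, hp⟩ := finHelly 𝔡 hfin (fun C hC => hconv C (hsub hC))
          (fun C hC => hcl C (hsub hC))
          (fun A hA A' hA' B hB B' hB' =>
            hproj A (hsub hA) A' (hsub hA') B (hsub hB) B' (hsub hB'))
        refine ⟨p, hp C₀ (Set.mem_insert _ _), Set.mem_iInter₂.2 fun c hc => ?_⟩
        exact hp c.1 (Set.mem_insert_of_mem _ ⟨c, hc, rfl⟩)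
      obtain ⟨p, -, hp⟩ := key
      rw [Set.mem_iInter] at hp
      exact ⟨p, Set.mem_sInter.2 fun C hC => hp ⟨C, hC⟩⟩
  · ext x
    simp only [Set.mem_iInter, Set.mem_image]
    constructor
    · rintro ⟨p, hp, rfl⟩ C hC C' hC'
      exact ⟨p, ⟨Set.mem_sInter.1 hp C hC, Set.mem_sInter.1 hp C' hC'⟩, rfl⟩
    · intro hx
      have hx' : ∀ C ∈ 𝔠, ∀ C' ∈ 𝔠, ∃ p, p ∈ C ∩ C' ∧ p 0 = x := by
        intro C hC C' hC'
        obtain ⟨p, hp, hpx⟩ := hx C hC C' hC'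
        exact ⟨p, hp, hpx⟩
      obtain ⟨p, hp0, hp⟩ := lineHelly 𝔠 hconv hcl hfb x hx'
      exact ⟨p, Set.mem_sInter.2 hp, hp0⟩
end

section
/- Let X be a two-dimensional Banach space, let 𝒦 be a collection of convex closed subsets of X with nonempty total intersection, and let S ⊆ X be a convex closed set symmetric with respect to 0. Suppose either some member of 𝒦 is bounded or S is bounded. Then (⋂_{K∈𝒦} K) + S = ⋂_{K,K'∈𝒦} ((K ∩ K') + S). -/
open Pointwise

private lemma finset_card_le_two {α : Type*} [Inhabited α] [DecidableEq α] {s : Finset α}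
    (h : s.card ≤ 2) : ∃ a b, s ⊆ {a, b} := by
  classical
  interval_cases h' : s.card
  · exact ⟨default, default, by
      simp [Finset.card_eq_zero.mp h']⟩
  · obtain ⟨a, ha⟩ := Finset.card_eq_one.mp h'
    refine ⟨a, a, ?_⟩
    simp [ha]
  · obtain ⟨a, b, _, hab⟩ := Finset.card_eq_two.mp h'
    refine ⟨a, b, ?_⟩
    simp [hab]

/-- **Lemma (H-IN)**: let `X` be a two-dimensional Banach space, `𝒦` a collection of convex
closed subsets of `X` with nonempty total intersection, and `S ⊆ X` a nonempty convex closed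
set symmetric with respect to `0`. If some member of `𝒦` is bounded or `S` is bounded, then
`(⋂ 𝒦) + S = ⋂_{K,K'∈𝒦} ((K ∩ K') + S)`. -/
theorem stmt_6 {X : Type*} [NormedAddCommGroup X] [NormedSpace ℝ X]
    (hdim : Module.finrank ℝ X = 2)
    (𝒦 : Set (Set X)) (hconv : ∀ K ∈ 𝒦, Convex ℝ K) (hcl : ∀ K ∈ 𝒦, IsClosed K)
    (hint : (⋂₀ 𝒦).Nonempty)
    (S : Set X) (hSne : S.Nonempty) (hSconv : Convex ℝ S) (hScl : IsClosed S)
    (hSsym : -S = S)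
    (hb : (∃ K ∈ 𝒦, Bornology.IsBounded K) ∨ Bornology.IsBounded S) :
    (⋂₀ 𝒦) + S = ⋂ K ∈ 𝒦, ⋂ K' ∈ 𝒦, (K ∩ K') + S := by
  classical
  have hFD : FiniteDimensional ℝ X :=
    Module.finite_of_finrank_pos (by rw [hdim]; norm_num)
  apply Set.Subset.antisymm
  · -- easy inclusion
    rintro z hz
    obtain ⟨a, ha, s, hs, rfl⟩ := Set.mem_add.mp hz
    refine Set.mem_iInter₂.mpr fun K hK => Set.mem_iInter₂.mpr fun K' hK' => ?_
    exact Set.add_mem_add ⟨ha K hK, ha K' hK'⟩ hs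
  · rintro x hx
    simp only [Set.mem_iInter] at hx
    -- reduce: find y ∈ ⋂₀ 𝒦 with x - y ∈ S
    rcases Set.eq_empty_or_nonempty 𝒦 with h𝒦 | h𝒦ne
    · obtain ⟨s, hs⟩ := hSne
      refine Set.mem_add.mpr ⟨x - s, ?_, s, hs, by abel⟩
      simp [h𝒦]
    -- the translate T = x + S
    set T : Set X := (fun z => x + z) '' S with hT
    have hTconv : Convex ℝ T := hSconv.translate x
    have hTcl : IsClosed T := (Homeomorph.addLeft x).isClosedMap _ hScl
    have hTmem : ∀ {y : X}, y ∈ T ↔ x - y ∈ S := by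
      intro y
      constructor
      · rintro ⟨s, hs, rfl⟩
        have : -s ∈ -S := Set.neg_mem_neg.mpr hs
        rw [hSsym] at this
        simpa using this
      · intro h
        have : -(x - y) ∈ -S := Set.neg_mem_neg.mpr h
        rw [hSsym] at this
        exact ⟨-(x - y), this, by show x + -(x - y) = y; rw [← sub_eq_add_neg, sub_sub_cancel]⟩
    -- the key pairwise intersection property
    have hkey : ∀ K ∈ 𝒦, ∀ K' ∈ 𝒦, (T ∩ (K ∩ K')).Nonempty := by
      intro K hK K' hK'
      obtain ⟨a, ha, s, hs, hxa⟩ := Set.mem_add.mp (hx K hK K' hK')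
      exact ⟨a, hTmem.mpr (by rw [← hxa]; simpa using hs), ha⟩
    have hKne : ∀ K ∈ 𝒦, (T ∩ K).Nonempty := by
      intro K hK
      obtain ⟨a, haT, haK, _⟩ := hkey K hK K hK
      exact ⟨a, haT, haK⟩
    -- set up the family for Helly
    set F : Option ↥𝒦 → Set X := fun i => Option.elim i T (fun K => K.val) with hF
    have hFconv : ∀ i, Convex ℝ (F i) := by
      rintro (_ | K)
      · exact hTconv
      · exact hconv K.val K.property
    have hFcl : ∀ i, IsClosed (F i) := by
      rintro (_ | K)
      · exact hTcl
      · exact hcl K.val K.property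
    -- every finite subfamily (in particular every ≤ 3 subfamily) meets
    have h3 : ∀ J : Finset (Option ↥𝒦), J.card ≤ Module.finrank ℝ X + 1 →
        (⋂ i ∈ J, F i).Nonempty := by
      intro J hJcard
      rw [hdim] at hJcard
      by_cases hn : none ∈ J
      · -- J = insert none J', J' has ≤ 2 elements, all of form some K
        have hJ' : (J.erase none).card ≤ 2 := by
          have := Finset.card_erase_of_mem hn
          omega
        obtain ⟨a, b, hab⟩ := finset_card_le_two (α := Option ↥𝒦) hJ'
        -- choose representatives
        obtain ⟨K0, hK0⟩ := h𝒦ne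
        set Ka : Set X := Option.elim a K0 (fun K => K.val) with hKa
        set Kb : Set X := Option.elim b K0 (fun K => K.val) with hKb
        have hKa𝒦 : Ka ∈ 𝒦 := by cases a with
          | none => exact hK0
          | some K => exact K.property
        have hKb𝒦 : Kb ∈ 𝒦 := by cases b with
          | none => exact hK0
          | some K => exact K.property
        obtain ⟨z, hzT, hza, hzb⟩ := hkey Ka hKa𝒦 Kb hKb𝒦
        refine ⟨z, Set.mem_iInter₂.mpr fun i hi => ?_⟩
        cases i with
        | none => exact hzT
        | some K =>
          have hmem : some K ∈ ({a, b} : Finset (Option ↥𝒦)) :=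
            hab (Finset.mem_erase.mpr ⟨by simp, hi⟩)
          rcases Finset.mem_insert.mp hmem with h | h
          · have hh : Ka = (K : Set X) := by rw [hKa, ← h]; rfl
            have hz' : z ∈ (K : Set X) := hh ▸ hza
            exact hz'
          · have h : some K = b := Finset.mem_singleton.mp h
            have hh : Kb = (K : Set X) := by rw [hKb, ← h]; rfl
            have hz' : z ∈ (K : Set X) := hh ▸ hzb
            exact hz'
      · -- no T: use the total intersection point
        obtain ⟨y, hy⟩ := hint
        refine ⟨y, Set.mem_iInter₂.mpr fun i hi => ?_⟩
        cases i with
        | none => exact absurd hi hn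
        | some K => exact hy K.val K.property
    have hfin : ∀ J : Finset (Option ↥𝒦), (⋂ i ∈ J, F i).Nonempty := by
      intro J
      exact Convex.helly_theorem' (𝕜 := ℝ) (s := J) (fun i _ => hFconv i)
        (fun I _ hI => h3 I hI)
    -- pick a compact member of the family
    obtain ⟨i0, hi0c⟩ : ∃ i0, IsCompact (F i0) := by
      rcases hb with ⟨K, hK, hKb⟩ | hSb
      · exact ⟨some ⟨K, hK⟩, Metric.isCompact_of_isClosed_isBounded (hcl K hK) hKb⟩
      · refine ⟨none, Metric.isCompact_of_isClosed_isBounded hTcl ?_⟩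
        have hTb : Bornology.IsBounded T := by
          have : T = {x} + S := by rw [Set.singleton_add]
          rw [this]
          exact Bornology.IsBounded.add Bornology.isBounded_singleton hSb
        exact hTb
    -- conclude by compactness
    have hall : (⋂ i, F i).Nonempty := by
      have := hi0c.inter_iInter_nonempty F hFcl (fun u => by
        have h := hfin (insert i0 u)
        obtain ⟨z, hz⟩ := h
        rw [Finset.set_biInter_insert] at hz
        exact ⟨z, hz⟩)
      obtain ⟨z, _, hz⟩ := this
      exact ⟨z, hz⟩
    obtain ⟨y, hy⟩ := hall
    rw [Set.mem_iInter] at hy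
    have hyK : y ∈ ⋂₀ 𝒦 := fun K hK => hy (some ⟨K, hK⟩)
    have hyT : y ∈ T := hy none
    refine Set.mem_add.mpr ⟨y, hyK, x - y, hTmem.mp hyT, by abel⟩
end

section
/- Let K₁, K₂ ⊆ ℝ² be convex closed sets with K₁ ∩ K₂ ≠ ∅, and let Π be a closed axis-parallel rectangle centered at 0. Then (K₁ ∩ K₂) + Π = (K₁ + Π) ∩ (K₂ + Π) ∩ H[(K₁ ∩ K₂) + Π]. -/
open Pointwise

namespace Stmt7Aux

abbrev E := Fin 2 → ℝ

lemma fin2_eq_or_rev : ∀ i i' : Fin 2, i' = i ∨ i' = i.rev := by decide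

lemma fin2_rev_ne : ∀ i : Fin 2, i.rev ≠ i := by decide

lemma fin2_zero_or_one : ∀ i : Fin 2, i = 0 ∨ i = 1 := by decide

lemma helly4 (G : Fin 4 → Set E) (hG : ∀ l, Convex ℝ (G l)) (w : Fin 4 → E)
    (hw : ∀ k l, k ≠ l → w k ∈ G l) : ∃ p, ∀ l, p ∈ G l := by
  have hdep : ¬ AffineIndependent ℝ w := by
    rw [← finrank_vectorSpan_le_iff_not_affineIndependent ℝ w
      (by simp : Fintype.card (Fin 4) = 2 + 2)]
    calc Module.finrank ℝ (vectorSpan ℝ (Set.range w))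
        ≤ Module.finrank ℝ E := Submodule.finrank_le _
      _ = 2 := Module.finrank_fin_fun ℝ
  obtain ⟨I, p, hpI, hpIc⟩ := Convex.radon_partition hdep
  refine ⟨p, fun l => ?_⟩
  by_cases hl : l ∈ I
  · refine convexHull_min ?_ (hG l) hpIc
    rintro v ⟨k, hk, rfl⟩
    exact hw k l (fun h => hk (h ▸ hl))
  · refine convexHull_min ?_ (hG l) hpI
    rintro v ⟨k, hk, rfl⟩
    exact hw k l (fun h => hl (h ▸ hk))

lemma side {P T : Set ℝ} (hP : Convex ℝ P) (hT : Convex ℝ T) (hd : ∀ p ∈ P, p ∉ T)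
    {p₀ t₀ : ℝ} (hp₀ : p₀ ∈ P) (ht₀ : t₀ ∈ T) :
    (∀ p ∈ P, ∀ t ∈ T, p < t) ∨ (∀ p ∈ P, ∀ t ∈ T, t < p) := by
  by_contra h
  push_neg at h
  obtain ⟨⟨p₁, hp₁, t₁, ht₁, h₁⟩, ⟨p₂, hp₂, t₂, ht₂, h₂⟩⟩ := h
  have hne : ∀ p ∈ P, ∀ t ∈ T, p ≠ t := fun p hp t ht e => hd p hp (e ▸ ht)
  have h₁' : t₁ < p₁ := lt_of_le_of_ne h₁ fun e => hne p₁ hp₁ t₁ ht₁ e.symm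
  have h₂' : p₂ < t₂ := lt_of_le_of_ne h₂ (hne p₂ hp₂ t₂ ht₂)
  rcases le_or_gt p₂ t₁ with h | h
  · exact hd t₁ (hP.ordConnected.out hp₂ hp₁ ⟨h, le_of_lt h₁'⟩) ht₁
  · exact hd p₂ hp₂ (hT.ordConnected.out ht₁ ht₂ ⟨le_of_lt h, le_of_lt h₂'⟩)

lemma crossing (K : Set E) (hK : Convex ℝ K) (i : Fin 2) (s m : ℝ)
    (c k : E) (hc : c ∈ K) (hk : k ∈ K) (hcm : s * c i < m) (hkm : m ≤ s * k i) :
    ∃ a ∈ K, s * a i = m := by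
  set φ : ℝ → ℝ := fun t => (1 - t) * (s * c i) + t * (s * k i) with hφ
  have hcont : Continuous φ := by fun_prop
  have h0 : φ 0 = s * c i := by simp [hφ]
  have h1 : φ 1 = s * k i := by simp [hφ]
  have hmem : m ∈ Set.Icc (φ 0) (φ 1) := by rw [h0, h1]; exact ⟨le_of_lt hcm, hkm⟩
  obtain ⟨t, ht, hφt⟩ :=
    intermediate_value_Icc (a := (0:ℝ)) (b := 1) zero_le_one hcont.continuousOn hmem
  refine ⟨(1 - t) • c + t • k, hK hc hk (by linarith [ht.2]) ht.1 (by ring), ?_⟩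
  have hco : ((1 - t) • c + t • k) i = (1 - t) * c i + t * k i := by
    simp [Pi.add_apply, Pi.smul_apply, smul_eq_mul]
  rw [hco, ← hφt, hφ]
  ring


lemma approx (K : Set E) (hK : Convex ℝ K) (hKcl : IsClosed K)
    (i : Fin 2) (s σ m : ℝ) (hs : s = 1 ∨ s = -1) (hσ : σ = 1 ∨ σ = -1)
    (a b : E) (ha : a ∈ K) (hai : s * a i = m) (hbi : s * b i = m)
    (hab : σ * a i.rev < σ * b i.rev)
    (hP : ∀ δ > (0:ℝ), ∀ N : ℝ, ∃ c ∈ K, (m - δ < s * c i ∧ s * c i ≤ m) ∧ N < σ * c i.rev) :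
    b ∈ K := by
  have hs0 : s ≠ 0 := by rcases hs with h | h <;> rw [h] <;> norm_num
  have hσ0 : σ ≠ 0 := by rcases hσ with h | h <;> rw [h] <;> norm_num
  have habs : ∀ u : ℝ, |s * u| = |u| := by
    intro u; rcases hs with h | h <;> rw [h] <;> simp
  rw [← hKcl.closure_eq]
  rw [Metric.mem_closure_iff]
  intro ε hε
  obtain ⟨c, hcK, ⟨hc1, hc2⟩, hc3⟩ := hP (ε/2) (by positivity) (σ * b i.rev)
  have hAC : σ * a i.rev < σ * c i.rev := lt_trans hab hc3
  set t : ℝ := (σ * b i.rev - σ * a i.rev) / (σ * c i.rev - σ * a i.rev) with hts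
  have hden : (0:ℝ) < σ * c i.rev - σ * a i.rev := by linarith
  have ht0 : 0 < t := by apply div_pos <;> linarith
  have ht1 : t < 1 := by
    rw [hts, div_lt_one hden]; linarith
  set p := (1 - t) • a + t • c with hp
  have hpK : p ∈ K := hK ha hcK (by linarith) (le_of_lt ht0) (by ring)
  have hpco : ∀ i' : Fin 2, p i' = (1 - t) * a i' + t * c i' := by
    intro i'; simp [hp, Pi.add_apply, Pi.smul_apply, smul_eq_mul]
  have hpj : p i.rev = b i.rev := by
    have h1 : σ * p i.rev = σ * b i.rev := by
      rw [hpco]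
      have : σ * ((1 - t) * a i.rev + t * c i.rev)
          = σ * a i.rev + t * (σ * c i.rev - σ * a i.rev) := by ring
      rw [this, hts, div_mul_cancel₀ _ (ne_of_gt hden)]
      ring
    exact mul_left_cancel₀ hσ0 h1
  have hpi : |p i - b i| < ε := by
    have h1 : s * p i = (1 - t) * m + t * (s * c i) := by rw [hpco]; rw [← hai]; ring
    have h2 : s * p i ≤ m := by rw [h1]; nlinarith
    have h3 : m - ε/2 < s * p i := by rw [h1]; nlinarith
    have h4 : |s * p i - s * b i| < ε := by rw [hbi]; rw [abs_lt]; constructor <;> nlinarith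
    calc |p i - b i| = |s * (p i - b i)| := (habs _).symm
      _ = |s * p i - s * b i| := by ring_nf
      _ < ε := h4
  refine ⟨p, hpK, ?_⟩
  rw [dist_pi_lt_iff hε]
  intro i'
  rcases fin2_eq_or_rev i i' with h | h
  · rw [h, Real.dist_eq, abs_sub_comm]; exact h ▸ hpi
  · rw [h, hpj, Real.dist_eq, sub_self, abs_zero]; exact hε

lemma main_false (K₁ K₂ : Set E)
    (h₁conv : Convex ℝ K₁) (h₁cl : IsClosed K₁)
    (h₂conv : Convex ℝ K₂) (h₂cl : IsClosed K₂)
    (i : Fin 2) (s m : ℝ) (hs : s = 1 ∨ s = -1)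
    (hlt : ∀ c ∈ K₁ ∩ K₂, s * c i < m)
    (hsup : ∀ δ > (0:ℝ), ∃ c ∈ K₁ ∩ K₂, m - δ < s * c i)
    (k₁ k₂ : E) (hk₁ : k₁ ∈ K₁) (hk₂ : k₂ ∈ K₂)
    (hk₁m : m ≤ s * k₁ i) (hk₂m : m ≤ s * k₂ i) : False := by
  have hs0 : s ≠ 0 := by rcases hs with h | h <;> rw [h] <;> norm_num
  have habs : ∀ u : ℝ, |s * u| = |u| := by
    intro u; rcases hs with h | h <;> rw [h] <;> simp
  set j := i.rev with hj
  obtain ⟨c₀, hc₀, -⟩ := hsup 1 one_pos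
  obtain ⟨a₁, ha₁K, ha₁⟩ := crossing K₁ h₁conv i s m c₀ k₁ hc₀.1 hk₁ (hlt c₀ hc₀) hk₁m
  obtain ⟨a₂, ha₂K, ha₂⟩ := crossing K₂ h₂conv i s m c₀ k₂ hc₀.2 hk₂ (hlt c₀ hc₀) hk₂m
  have hCcl : IsClosed (K₁ ∩ K₂) := h₁cl.inter h₂cl
  -- Step 2: points of C near the line {s * z i = m} are unbounded in the j coordinate
  have hU : ∀ δ > (0:ℝ), ∀ N : ℝ, ∃ c ∈ K₁ ∩ K₂, m - δ < s * c i ∧ N < |c j| := by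
    intro δ hδ N
    by_contra hcon
    push_neg at hcon
    set F : ℕ → Set E := fun n => (K₁ ∩ K₂) ∩ {z | m - min (δ/2) (1/(n+1)) ≤ s * z i} with hF
    have hpos : ∀ n : ℕ, (0:ℝ) < min (δ/2) (1/(n+1)) := by
      intro n; exact lt_min (by positivity) (by positivity)
    have hnon : ∀ n, (F n).Nonempty := by
      intro n
      obtain ⟨c, hc, hlt'⟩ := hsup _ (hpos n)
      exact ⟨c, hc, le_of_lt hlt'⟩
    have hclosed : ∀ n, IsClosed (F n) := fun n =>
      hCcl.inter (isClosed_le continuous_const (continuous_const.mul (continuous_apply i)))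
    have hanti : ∀ n, F (n+1) ⊆ F n := by
      intro n z hz
      have hz2 := hz.2
      simp only [Set.mem_setOf_eq] at hz2
      push_cast at hz2
      refine ⟨hz.1, ?_⟩
      show m - min (δ/2) (1/((n:ℝ)+1)) ≤ s * z i
      have h1 : (1:ℝ)/((n:ℝ)+1+1) ≤ 1/((n:ℝ)+1) := by
        apply one_div_le_one_div_of_le (by positivity)
        linarith
      have h2 : min (δ/2) (1/((n:ℝ)+1+1)) ≤ min (δ/2) (1/((n:ℝ)+1)) :=
        min_le_min (le_refl (δ/2)) h1
      linarith
    have hbound : ∀ n, F n ⊆ Metric.closedBall 0 (|m| + δ + |N|) := by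
      intro n z hz
      have hzi : s * z i < m := hlt z hz.1
      have hzi2 : m - δ/2 ≤ s * z i := le_trans (by
        have := min_le_left (δ/2) (1/((n:ℝ)+1)); linarith) hz.2
      have hzj : |z j| ≤ N := hcon z hz.1 (by linarith)
      rw [Metric.mem_closedBall, dist_zero_right]
      rw [pi_norm_le_iff_of_nonneg (by positivity)]
      intro i'
      rcases fin2_eq_or_rev i i' with h | h
      · rw [h, Real.norm_eq_abs, ← habs, abs_le]
        constructor
        · have := neg_abs_le m
          have := abs_nonneg N
          linarith
        · have := le_abs_self m
          have := abs_nonneg N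
          linarith
      · rw [h, ← hj, Real.norm_eq_abs]
        have := le_abs_self N
        have := abs_nonneg m
        linarith
    have hcomp : IsCompact (F 0) :=
      (isCompact_closedBall (0:E) (|m| + δ + |N|)).of_isClosed_subset (hclosed 0) (hbound 0)
    obtain ⟨cstar, hcstar⟩ :=
      IsCompact.nonempty_iInter_of_sequence_nonempty_isCompact_isClosed F hanti hnon hcomp hclosed
    have hmem : ∀ n : ℕ, cstar ∈ F n := fun n => Set.mem_iInter.mp hcstar n
    have hlt' : s * cstar i < m := hlt cstar (hmem 0).1
    obtain ⟨n, hn⟩ := exists_nat_one_div_lt (show (0:ℝ) < m - s * cstar i by linarith)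
    have h1 := (hmem n).2
    have h2 : min (δ/2) (1/((n:ℝ)+1)) ≤ 1/((n:ℝ)+1) := min_le_right _ _
    simp only [Set.mem_setOf_eq] at h1
    linarith
  -- Step 3: fix a side σ on which C escapes to infinity
  have hPM : ∃ σ : ℝ, (σ = 1 ∨ σ = -1) ∧
      ∀ δ > (0:ℝ), ∀ N : ℝ, ∃ c ∈ K₁ ∩ K₂,
        (m - δ < s * c i ∧ s * c i ≤ m) ∧ N < σ * c j := by
    by_cases hcase : ∀ δ > (0:ℝ), ∀ N : ℝ, ∃ c ∈ K₁ ∩ K₂, (m - δ < s * c i) ∧ N < c j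
    · refine ⟨1, Or.inl rfl, fun δ hδ N => ?_⟩
      obtain ⟨c, hc, h1, h2⟩ := hcase δ hδ N
      exact ⟨c, hc, ⟨h1, le_of_lt (hlt c hc)⟩, by rw [one_mul]; exact h2⟩
    · push_neg at hcase
      obtain ⟨δ₁, hδ₁, N₁, hN₁⟩ := hcase
      refine ⟨-1, Or.inr rfl, fun δ hδ N => ?_⟩
      obtain ⟨c, hc, h1, h2⟩ := hU (min δ δ₁) (lt_min hδ hδ₁) (max |N| |N₁|)
      have hci : m - δ₁ < s * c i := by
        have := min_le_right δ δ₁; linarith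
      have hciδ : m - δ < s * c i := by
        have := min_le_left δ δ₁; linarith
      have hle : c j ≤ N₁ := hN₁ c hc hci
      have hcj : c j < -(max |N| |N₁|) := by
        rcases abs_cases (c j) with ⟨he, _⟩ | ⟨he, _⟩
        · exfalso
          have h3 := le_max_right |N| |N₁|
          have h4 := le_abs_self N₁
          linarith [he ▸ h2]
        · linarith [he ▸ h2]
      refine ⟨c, hc, ⟨hciδ, le_of_lt (hlt c hc)⟩, ?_⟩
      have h3 := le_max_left |N| |N₁|
      have h4 := le_abs_self N
      nlinarith
  obtain ⟨σ, hσ, hP⟩ := hPM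
  have hσ0 : σ ≠ 0 := by rcases hσ with h | h <;> rw [h] <;> norm_num
  -- Step 4
  rcases lt_trichotomy (σ * a₁ j) (σ * a₂ j) with h | h | h
  · have ha₂K₁ : a₂ ∈ K₁ :=
      approx K₁ h₁conv h₁cl i s σ m hs hσ a₁ a₂ ha₁K ha₁ ha₂ h
        (fun δ hδ N => by
          obtain ⟨c, hc, h1, h2⟩ := hP δ hδ N
          exact ⟨c, hc.1, h1, h2⟩)
    exact absurd ha₂ (ne_of_lt (hlt a₂ ⟨ha₂K₁, ha₂K⟩))
  · have hji : a₁ j = a₂ j := mul_left_cancel₀ hσ0 h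
    have hii : a₁ i = a₂ i := mul_left_cancel₀ hs0 (ha₁.trans ha₂.symm)
    have heq : a₁ = a₂ := by
      funext i'
      rcases fin2_eq_or_rev i i' with h' | h'
      · rw [h']; exact hii
      · rw [h', ← hj]; exact hji
    exact absurd ha₁ (ne_of_lt (hlt a₁ ⟨ha₁K, heq ▸ ha₂K⟩))
  · have ha₁K₂ : a₁ ∈ K₂ :=
      approx K₂ h₂conv h₂cl i s σ m hs hσ a₂ a₁ ha₂K ha₂ ha₁ h
        (fun δ hδ N => by
          obtain ⟨c, hc, h1, h2⟩ := hP δ hδ N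
          exact ⟨c, hc.2, h1, h2⟩)
    exact absurd ha₁ (ne_of_lt (hlt a₁ ⟨ha₁K, ha₁K₂⟩))

lemma key (K₁ K₂ : Set E)
    (h₁conv : Convex ℝ K₁) (h₁cl : IsClosed K₁)
    (h₂conv : Convex ℝ K₂) (h₂cl : IsClosed K₂)
    (hne : (K₁ ∩ K₂).Nonempty)
    (II : Fin 2 → Set ℝ) (hII : ∀ i', IsClosedInterval (II i'))
    (hsym : ∀ i', -(II i') = II i') (hIIne : ∀ i', (II i').Nonempty)
    (x : E) (hx : x ∈ rectHull ((K₁ ∩ K₂) + {z : E | ∀ i', z i' ∈ II i'}))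
    (k₁ k₂ : E) (hk₁ : k₁ ∈ K₁) (hk₂ : k₂ ∈ K₂)
    (hxk₁ : ∀ i', x i' - k₁ i' ∈ II i') (hxk₂ : ∀ i', x i' - k₂ i' ∈ II i')
    (i : Fin 2) : ∃ c ∈ K₁ ∩ K₂, x i - c i ∈ II i := by
  by_contra hcon
  push_neg at hcon
  have hnegmem : ∀ i' : Fin 2, ∀ u ∈ II i', -u ∈ II i' := by
    intro i' u hu
    rw [← hsym i', Set.mem_neg, neg_neg]
    exact hu
  have h0mem : ∀ i' : Fin 2, (0:ℝ) ∈ II i' := by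
    intro i'
    obtain ⟨u, hu⟩ := hIIne i'
    rcases le_total 0 u with h | h
    · exact (hII i').2.out (hnegmem i' u hu) hu ⟨by linarith, h⟩
    · exact (hII i').2.out hu (hnegmem i' u hu) ⟨h, by linarith⟩
  have hIconv : ∀ i', Convex ℝ (II i') := fun i' => convex_iff_ordConnected.mpr (hII i').2
  set P := (fun z : E => z i) '' (K₁ ∩ K₂) with hPdef
  set T := {t : ℝ | x i - t ∈ II i} with hTdef
  have hPconv : Convex ℝ P := (h₁conv.inter h₂conv).linear_image (LinearMap.proj i)
  have hTconv : Convex ℝ T := by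
    intro t₁ ht₁ t₂ ht₂ a b ha hb hab
    show x i - (a • t₁ + b • t₂) ∈ II i
    have he : x i - (a • t₁ + b • t₂) = a • (x i - t₁) + b • (x i - t₂) := by
      simp only [smul_eq_mul]
      linear_combination (-(x i)) * hab
    rw [he]
    exact hIconv i ht₁ ht₂ ha hb hab
  have hdisj : ∀ p ∈ P, p ∉ T := by
    rintro p ⟨c, hc, rfl⟩ ht
    exact hcon c hc ht
  obtain ⟨c₀, hc₀⟩ := hne
  have hp₀ : c₀ i ∈ P := ⟨c₀, hc₀, rfl⟩
  have ht₀ : x i ∈ T := by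
    show x i - x i ∈ II i
    rw [sub_self]; exact h0mem i
  obtain ⟨s, hs, hside⟩ : ∃ s : ℝ, (s = 1 ∨ s = -1) ∧
      ∀ c ∈ K₁ ∩ K₂, ∀ u ∈ II i, s * c i < s * (x i - u) := by
    rcases side hPconv hTconv hdisj hp₀ ht₀ with h | h
    · refine ⟨1, Or.inl rfl, fun c hc u hu => ?_⟩
      have hT' : x i - u ∈ T := by
        show x i - (x i - u) ∈ II i
        rw [sub_sub_cancel]; exact hu
      simpa using h (c i) ⟨c, hc, rfl⟩ (x i - u) hT'
    · refine ⟨-1, Or.inr rfl, fun c hc u hu => ?_⟩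
      have hT' : x i - u ∈ T := by
        show x i - (x i - u) ∈ II i
        rw [sub_sub_cancel]; exact hu
      have := h (c i) ⟨c, hc, rfl⟩ (x i - u) hT'
      nlinarith
  have hs0 : s ≠ 0 := by rcases hs with h | h <;> rw [h] <;> norm_num
  have hss : s * s = 1 := by rcases hs with h | h <;> rw [h] <;> norm_num
  have hsabs : ∀ u : ℝ, |s * u| = |u| := by
    intro u; rcases hs with h | h <;> rw [h] <;> simp
  -- II i is bounded above
  have hbdd : BddAbove (II i) := by
    by_contra hb
    have huniv : ∀ v : ℝ, v ∈ II i := by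
      intro v
      obtain ⟨u, hu, huv⟩ := not_bddAbove_iff.mp hb |v|
      exact (hII i).2.out (hnegmem i u hu)
        hu ⟨by linarith [neg_abs_le v, le_abs_self v], by linarith [le_abs_self v]⟩
    have := hside c₀ hc₀ (x i - c₀ i) (huniv _)
    rw [sub_sub_cancel] at this
    exact lt_irrefl _ this
  set a := sSup (II i) with hadef
  have haI : a ∈ II i := (hII i).1.csSup_mem (hIIne i) hbdd
  have habs : ∀ u ∈ II i, |u| ≤ a := by
    intro u hu
    rw [abs_le]
    refine ⟨?_, le_csSup hbdd hu⟩
    have := le_csSup hbdd (hnegmem i u hu)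
    linarith
  set m := s * x i - a with hmdef
  have hsa : s * a ∈ II i := by
    rcases hs with h | h
    · rw [h, one_mul]; exact haI
    · rw [h]
      have : (-1 : ℝ) * a = -a := by ring
      rw [this]
      exact hnegmem i a haI
  have hmlt : ∀ c ∈ K₁ ∩ K₂, s * c i < m := by
    intro c hc
    have h1 := hside c hc (s * a) hsa
    have h2 : s * (x i - s * a) = s * x i - (s * s) * a := by ring
    rw [h2, hss, one_mul] at h1
    exact h1
  set f : E → ℝ := fun c => s * c i with hfdef
  have hMne : (f '' (K₁ ∩ K₂)).Nonempty := ⟨f c₀, c₀, hc₀, rfl⟩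
  have hMbdd : BddAbove (f '' (K₁ ∩ K₂)) := by
    refine ⟨m, ?_⟩
    rintro y ⟨c, hc, rfl⟩
    exact le_of_lt (hmlt c hc)
  set M := sSup (f '' (K₁ ∩ K₂)) with hMdef
  have hMle : M ≤ m := csSup_le hMne (by rintro y ⟨c, hc, rfl⟩; exact le_of_lt (hmlt c hc))
  -- the rectangle witnessing the hull bound
  set J : Set ℝ := {u | s * u ≤ M + a} with hJdef
  have hJint : IsClosedInterval J := by
    constructor
    · exact isClosed_le (continuous_const.mul continuous_id) continuous_const
    · constructor
      intro u hu v hv w hw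
      have hu' : s * u ≤ M + a := hu
      have hv' : s * v ≤ M + a := hv
      show s * w ≤ M + a
      rcases hs with h | h <;> subst h <;> nlinarith [hw.1, hw.2]
  have hunivint : IsClosedInterval (Set.univ : Set ℝ) :=
    ⟨isClosed_univ, Set.ordConnected_univ⟩
  set R := {z : E | s * z i ≤ M + a} with hRdef
  have hxR : x ∈ R := by
    apply Set.mem_sInter.mp hx R
    constructor
    · refine ⟨if i = 0 then J else Set.univ, if i = 0 then Set.univ else J, ?_, ?_, ?_⟩
      · split_ifs <;> [exact hJint; exact hunivint]
      · split_ifs <;> [exact hunivint; exact hJint]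
      · rcases fin2_zero_or_one i with h | h
        · subst h
          simp only [if_pos rfl]
          ext z
          exact ⟨fun hzz => ⟨hzz, trivial⟩, fun hzz => hzz.1⟩
        · subst h
          simp only [if_neg (by decide : (1 : Fin 2) ≠ 0)]
          ext z
          exact ⟨fun hzz => ⟨trivial, hzz⟩, fun hzz => hzz.2⟩
    · intro z hz
      obtain ⟨c, hc, p, hp, rfl⟩ := Set.mem_add.mp hz
      show s * (c + p) i ≤ M + a
      have h1 : s * c i ≤ M := le_csSup hMbdd ⟨c, hc, rfl⟩
      have h2 : s * p i ≤ a := by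
        have := habs (p i) (hp i)
        have h3 := le_abs_self (s * p i)
        rw [hsabs] at h3
        linarith
      have h4 : s * (c + p) i = s * c i + s * p i := by
        simp only [Pi.add_apply]; ring
      linarith
  have hmM : m ≤ M := by
    have : s * x i ≤ M + a := hxR
    rw [hmdef]; linarith
  have hsup : ∀ δ > (0:ℝ), ∃ c ∈ K₁ ∩ K₂, m - δ < s * c i := by
    intro δ hδ
    obtain ⟨y, ⟨c, hc, rfl⟩, hy⟩ := exists_lt_of_lt_csSup hMne (show m - δ < M by linarith)
    exact ⟨c, hc, hy⟩
  have hkb : ∀ k' : E, (∀ i', x i' - k' i' ∈ II i') → m ≤ s * k' i := by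
    intro k' hk'
    have h1 := habs _ (hk' i)
    have h2 := le_abs_self (s * (x i - k' i))
    rw [hsabs] at h2
    have h3 : s * (x i - k' i) = s * x i - s * k' i := by ring
    rw [hmdef]; linarith [h3 ▸ h2]
  exact main_false K₁ K₂ h₁conv h₁cl h₂conv h₂cl i s m hs hmlt hsup
    k₁ k₂ hk₁ hk₂ (hkb k₁ hxk₁) (hkb k₂ hxk₂)

end Stmt7Aux

/-- **Lemma (2K-H)**: for convex closed `K₁, K₂ ⊆ ℝ²` with `K₁ ∩ K₂ ≠ ∅` and every closed
axis-parallel rectangle `Π = I₁ × I₂` centered at `0` (each `Iⱼ` a closed interval symmetric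
about `0`), one has `(K₁ ∩ K₂) + Π = (K₁ + Π) ∩ (K₂ + Π) ∩ H[(K₁ ∩ K₂) + Π]`. -/
theorem stmt_7 (K₁ K₂ : Set (Fin 2 → ℝ))
    (h₁conv : Convex ℝ K₁) (h₁cl : IsClosed K₁)
    (h₂conv : Convex ℝ K₂) (h₂cl : IsClosed K₂)
    (hne : (K₁ ∩ K₂).Nonempty)
    (I₁ I₂ : Set ℝ) (hI₁ : IsClosedInterval I₁) (hI₂ : IsClosedInterval I₂)
    (hI₁sym : -I₁ = I₁) (hI₂sym : -I₂ = I₂)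
    (Rect : Set (Fin 2 → ℝ)) (hRect : Rect = {x | x 0 ∈ I₁ ∧ x 1 ∈ I₂}) :
    (K₁ ∩ K₂) + Rect = (K₁ + Rect) ∩ (K₂ + Rect) ∩ rectHull ((K₁ ∩ K₂) + Rect) := by
  set II : Fin 2 → Set ℝ := ![I₁, I₂] with hIIdef
  have hII0 : II 0 = I₁ := rfl
  have hII1 : II 1 = I₂ := rfl
  have hIIint : ∀ i', IsClosedInterval (II i') := by
    intro i'
    fin_cases i'
    · exact hI₁
    · exact hI₂
  have hIIsym : ∀ i', -(II i') = II i' := by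
    intro i'
    fin_cases i'
    · exact hI₁sym
    · exact hI₂sym
  have hRect' : Rect = {z : Fin 2 → ℝ | ∀ i', z i' ∈ II i'} := by
    rw [hRect]
    ext z
    simp only [Set.mem_setOf_eq, Fin.forall_fin_two]
    rfl
  apply Set.Subset.antisymm
  · intro z hz
    refine ⟨⟨Set.add_subset_add_right Set.inter_subset_left hz,
      Set.add_subset_add_right Set.inter_subset_right hz⟩, ?_⟩
    exact Set.mem_sInter.mpr fun R hR => hR.2 hz
  · rintro x ⟨⟨hx1, hx2⟩, hxH⟩
    obtain ⟨k₁, hk₁, p₁, hp₁, hs₁⟩ := Set.mem_add.mp hx1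
    obtain ⟨k₂, hk₂, p₂, hp₂, hs₂⟩ := Set.mem_add.mp hx2
    have hp₁' : ∀ i', p₁ i' ∈ II i' := by rw [hRect'] at hp₁; exact hp₁
    have hp₂' : ∀ i', p₂ i' ∈ II i' := by rw [hRect'] at hp₂; exact hp₂
    have hIIne : ∀ i', (II i').Nonempty := fun i' => ⟨p₁ i', hp₁' i'⟩
    have hxk₁ : ∀ i', x i' - k₁ i' ∈ II i' := by
      intro i'
      have : x i' - k₁ i' = p₁ i' := by rw [← hs₁]; simp [Pi.add_apply]
      rw [this]; exact hp₁' i'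
    have hxk₂ : ∀ i', x i' - k₂ i' ∈ II i' := by
      intro i'
      have : x i' - k₂ i' = p₂ i' := by rw [← hs₂]; simp [Pi.add_apply]
      rw [this]; exact hp₂' i'
    rw [hRect'] at hxH
    obtain ⟨c₁, hc₁C, hc₁⟩ := Stmt7Aux.key K₁ K₂ h₁conv h₁cl h₂conv h₂cl hne II hIIint hIIsym hIIne
      x hxH k₁ k₂ hk₁ hk₂ hxk₁ hxk₂ 0
    obtain ⟨c₂, hc₂C, hc₂⟩ := Stmt7Aux.key K₁ K₂ h₁conv h₁cl h₂conv h₂cl hne II hIIint hIIsym hIIne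
      x hxH k₁ k₂ hk₁ hk₂ hxk₁ hxk₂ 1
    -- Helly for the four convex sets K₁, K₂, S 0, S 1
    set S : Fin 2 → Set (Fin 2 → ℝ) := fun i' => {z : Fin 2 → ℝ | x i' - z i' ∈ II i'} with hSdef
    have hIconv : ∀ i', Convex ℝ (II i') := fun i' =>
      convex_iff_ordConnected.mpr (hIIint i').2
    have hSconv : ∀ i', Convex ℝ (S i') := by
      intro i' z₁ h₁ z₂ h₂ a b ha hb hab
      show x i' - (a • z₁ + b • z₂) i' ∈ II i'
      have he : x i' - (a • z₁ + b • z₂) i' = a • (x i' - z₁ i') + b • (x i' - z₂ i') := by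
        simp only [Pi.add_apply, Pi.smul_apply, smul_eq_mul]
        linear_combination (-(x i')) * hab
      rw [he]
      exact hIconv i' h₁ h₂ ha hb hab
    set G : Fin 4 → Set (Fin 2 → ℝ) := fun l => match l with
      | 0 => K₁ | 1 => K₂ | 2 => S 0 | 3 => S 1 with hGdef
    set w : Fin 4 → (Fin 2 → ℝ) := fun k => match k with
      | 0 => k₂ | 1 => k₁ | 2 => c₂ | 3 => c₁ with hwdef
    have hGconv : ∀ l, Convex ℝ (G l) := by
      intro l
      fin_cases l
      · exact h₁conv
      · exact h₂conv
      · exact hSconv 0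
      · exact hSconv 1
    have hw : ∀ k l, k ≠ l → w k ∈ G l := by
      intro k l hkl
      fin_cases k <;> fin_cases l <;>
        first
          | exact absurd rfl hkl
          | exact hk₂
          | exact hk₁
          | exact hc₂C.1
          | exact hc₂C.2
          | exact hc₁C.1
          | exact hc₁C.2
          | exact hxk₂ 0
          | exact hxk₂ 1
          | exact hxk₁ 0
          | exact hxk₁ 1
          | exact hc₂
          | exact hc₁
    obtain ⟨p, hp⟩ := Stmt7Aux.helly4 G hGconv w hw
    refine Set.mem_add.mpr ⟨p, ⟨hp 0, hp 1⟩, x - p, ?_, by abel⟩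
    rw [hRect']
    intro i'
    show x i' - p i' ∈ II i'
    fin_cases i'
    · exact hp 2
    · exact hp 3
end

section
/- Let (M, ρ) be a pseudometric space and let F assign to each x ∈ M a nonempty closed bounded interval F(x) = [a(x), b(x)] ⊆ ℝ. Suppose λ ≥ 0 and for all x, y ∈ M one has a(x) − b(y) ≤ λ·ρ(x,y). Then the function f(x) = inf_{y∈M} ( b(y) + λ·ρ(x,y) ) satisfies f(x) ∈ F(x) for all x and |f(x) − f(y)| ≤ λ·ρ(x,y) for all x, y ∈ M. -/
/-- **Lemma (FP-R1)(i), explicit Lipschitz selection in `ℝ`**: let `(M,ρ)` be a pseudometric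
space, `F(x) = [a(x), b(x)]` nonempty compact intervals, `λ ≥ 0`, and suppose
`a(x) − b(y) ≤ λ·ρ(x,y)` for all `x, y`. Then `f(x) = inf_y (b(y) + λ·ρ(x,y))` is a selection
of `F` which is `λ`-Lipschitz with respect to `ρ`. -/
theorem stmt_8 {M : Type*} (ρ : M → M → ℝ)
    (hρself : ∀ x, ρ x x = 0) (hρsymm : ∀ x y, ρ x y = ρ y x)
    (hρtri : ∀ x y z, ρ x y ≤ ρ x z + ρ z y)
    (a b : M → ℝ) (hab : ∀ x, a x ≤ b x)
    (l : ℝ) (hl : 0 ≤ l)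
    (h : ∀ x y, a x - b y ≤ l * ρ x y) :
    (∀ x : M, (⨅ y : M, (b y + l * ρ x y)) ∈ Set.Icc (a x) (b x)) ∧
      (∀ x y : M,
        |(⨅ z : M, (b z + l * ρ x z)) - (⨅ z : M, (b z + l * ρ y z))| ≤ l * ρ x y) := by
  have hbdd : ∀ x : M, BddBelow (Set.range fun y => b y + l * ρ x y) := by
    intro x
    refine ⟨a x, ?_⟩
    rintro _ ⟨y, rfl⟩
    show a x ≤ b y + l * ρ x y
    linarith [h x y]
  have hlow : ∀ x : M, a x ≤ ⨅ y : M, (b y + l * ρ x y) := by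
    intro x
    haveI : Nonempty M := ⟨x⟩
    refine le_ciInf fun y => ?_
    have := h x y
    linarith
  have hup : ∀ x : M, (⨅ y : M, (b y + l * ρ x y)) ≤ b x := by
    intro x
    have := ciInf_le (hbdd x) x
    simpa [hρself x] using this
  have hlip : ∀ x y : M,
      (⨅ z : M, (b z + l * ρ x z)) - (⨅ z : M, (b z + l * ρ y z)) ≤ l * ρ x y := by
    intro x y
    haveI : Nonempty M := ⟨x⟩
    rw [sub_le_iff_le_add]
    have : (⨅ z : M, (b z + l * ρ x z)) - l * ρ x y ≤ ⨅ z : M, (b z + l * ρ y z) := by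
      refine le_ciInf fun z => ?_
      rw [sub_le_iff_le_add]
      have h1 := ciInf_le (hbdd x) z
      have h2 := hρtri x z y
      have h3 := hρsymm z y
      have h4 : l * ρ x z ≤ l * ρ y z + l * ρ x y := by nlinarith
      linarith
    linarith
  refine ⟨fun x => ⟨hlow x, hup x⟩, fun x y => ?_⟩
  rw [abs_sub_le_iff]
  exact ⟨hlip x y, by simpa [hρsymm y x] using hlip y x⟩
end

section
/- Let (M, ρ) be a pseudometric space and let F : M → 𝒦(ℝ) map into nonempty compact intervals of ℝ. Suppose that for every pair x, y ∈ M there exist g(x) ∈ F(x), g(y) ∈ F(y) with |g(x) − g(y)| ≤ ρ(x,y). Define F¹(x) = ⋂_{z∈M} ( F(z) + ρ(x,z)·[−1,1] ). Then F¹(x) ≠ ∅ for every x ∈ M, and the Hausdorff distance satisfies d_H(F¹(x), F¹(y)) ≤ ρ(x,y) for all x, y ∈ M. -/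
/-- **Proposition (X-1DIM)**: let `(M,ρ)` be a pseudometric space and `F(x) = [a(x), b(x)]`
nonempty compact intervals of `ℝ`. Suppose that for all `x, y` there are points
`g(x) ∈ F(x)`, `g(y) ∈ F(y)` with `|g(x) − g(y)| ≤ ρ(x,y)`. Then the balanced refinement
`F¹(x) = ⋂_z (F(z) + ρ(x,z)·[−1,1])` is nonempty for every `x`, and
`d_H(F¹(x), F¹(y)) ≤ ρ(x,y)` for all `x, y`. -/
theorem stmt_9 {M : Type*} (ρ : M → M → ℝ)
    (hρself : ∀ x, ρ x x = 0) (hρsymm : ∀ x y, ρ x y = ρ y x)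
    (hρtri : ∀ x y z, ρ x y ≤ ρ x z + ρ z y)
    (a b : M → ℝ) (hab : ∀ x, a x ≤ b x)
    (h : ∀ x y : M, ∃ gx ∈ Set.Icc (a x) (b x), ∃ gy ∈ Set.Icc (a y) (b y),
      |gx - gy| ≤ ρ x y) :
    (∀ x : M, (⋂ z : M, Set.Icc (a z - ρ x z) (b z + ρ x z)).Nonempty) ∧
      (∀ x y : M,
        Metric.hausdorffDist (⋂ z : M, Set.Icc (a z - ρ x z) (b z + ρ x z))
          (⋂ z : M, Set.Icc (a z - ρ y z) (b z + ρ y z)) ≤ ρ x y) := by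
  have hnn : ∀ x y, 0 ≤ ρ x y := by
    intro x y
    have h1 := hρtri x x y
    rw [hρself, hρsymm y x] at h1
    linarith
  -- cross inequality
  have hcross : ∀ x z w, a z - ρ x z ≤ b w + ρ x w := by
    intro x z w
    obtain ⟨gz, hgz, gw, hgw, hle⟩ := h z w
    have htri : ρ z w ≤ ρ x z + ρ x w := by
      have h1 := hρtri z w x
      rw [hρsymm z x] at h1
      linarith
    have h2 := abs_le.1 hle
    have := hgz.1; have := hgz.2; have := hgw.1; have := hgw.2
    linarith [h2.1, h2.2]
  have hbddA : ∀ x : M, BddAbove (Set.range fun z => a z - ρ x z) := by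
    intro x
    exact ⟨b x + ρ x x, by rintro _ ⟨z, rfl⟩; exact hcross x z x⟩
  have hbddB : ∀ x : M, BddBelow (Set.range fun z => b z + ρ x z) := by
    intro x
    exact ⟨a x - ρ x x, by rintro _ ⟨z, rfl⟩; exact hcross x x z⟩
  have hmem : ∀ (x : M) (u : ℝ),
      u ∈ (⋂ z : M, Set.Icc (a z - ρ x z) (b z + ρ x z)) ↔
        ∀ z, a z - ρ x z ≤ u ∧ u ≤ b z + ρ x z := by
    intro x u
    simp [Set.mem_iInter, Set.mem_Icc, forall_and]
  -- nonemptiness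
  have hne : ∀ x : M, (⋂ z : M, Set.Icc (a z - ρ x z) (b z + ρ x z)).Nonempty := by
    intro x
    haveI : Nonempty M := ⟨x⟩
    refine ⟨⨆ z, (a z - ρ x z), (hmem x _).2 fun z => ?_⟩
    constructor
    · exact le_ciSup (hbddA x) z
    · exact ciSup_le fun w => hcross x w z
  refine ⟨hne, ?_⟩
  -- one-sided approximation
  have key : ∀ x y : M, ∀ u ∈ (⋂ z : M, Set.Icc (a z - ρ x z) (b z + ρ x z)),
      ∃ v ∈ (⋂ z : M, Set.Icc (a z - ρ y z) (b z + ρ y z)), dist u v ≤ ρ x y := by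
    intro x y u hu
    haveI : Nonempty M := ⟨x⟩
    have hu' := (hmem x u).1 hu
    set Ay : ℝ := ⨆ z, (a z - ρ y z) with hAy
    set By : ℝ := ⨅ z, (b z + ρ y z) with hBy
    refine ⟨max Ay (min u By), (hmem y _).2 fun z => ⟨?_, ?_⟩, ?_⟩
    · exact le_trans (le_ciSup (hbddA y) z) (le_max_left _ _)
    · refine max_le (ciSup_le fun w => hcross y w z) ?_
      exact le_trans (min_le_right _ _) (ciInf_le (hbddB y) z)
    · rw [Real.dist_eq, abs_le]
      have hxz : ∀ z, ρ x z ≤ ρ x y + ρ y z := fun z => hρtri x z y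
      have hv1 : max Ay (min u By) ≤ u + ρ x y := by
        refine max_le (ciSup_le fun z => ?_) ?_
        · have := (hu' z).1
          have := hxz z
          linarith
        · have := hnn x y
          have := min_le_left u By
          linarith
      have hv2 : u - ρ x y ≤ max Ay (min u By) := by
        refine le_trans (le_min ?_ ?_) (le_max_right _ _)
        · linarith [hnn x y]
        · refine le_ciInf fun z => ?_
          have := (hu' z).2
          have := hxz z
          linarith
      constructor <;> [skip; skip] <;> linarith
  intro x y
  refine Metric.hausdorffDist_le_of_mem_dist (hnn x y) (key x y) ?_
  intro u hu
  obtain ⟨v, hv, hd⟩ := key y x u hu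
  exact ⟨v, hv, by rwa [hρsymm x y] ⟩
end

section
/- Let X be a Banach space and let A₁, A₂ ⊆ X be nonempty convex closed bounded sets that are centrally symmetric with respect to points c₁ and c₂ respectively. Then ‖c₁ − c₂‖ ≤ d_H(A₁, A₂). -/
/-- **Lemma (SYM)(ii)**: let `A₁, A₂` be nonempty convex closed bounded subsets of a Banach
space `X` which are centrally symmetric with respect to points `c₁` and `c₂` respectively
(i.e. the reflection `x ↦ 2c − x` maps the set onto itself). Then
`‖c₁ − c₂‖ ≤ d_H(A₁, A₂)`. -/
theorem stmt_11 {X : Type*} [NormedAddCommGroup X] [NormedSpace ℝ X] [CompleteSpace X]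
    (A₁ A₂ : Set X)
    (h₁ne : A₁.Nonempty) (h₁conv : Convex ℝ A₁) (h₁cl : IsClosed A₁)
    (h₁bdd : Bornology.IsBounded A₁)
    (h₂ne : A₂.Nonempty) (h₂conv : Convex ℝ A₂) (h₂cl : IsClosed A₂)
    (h₂bdd : Bornology.IsBounded A₂)
    (c₁ c₂ : X)
    (h₁sym : ∀ x ∈ A₁, c₁ + c₁ - x ∈ A₁) (h₂sym : ∀ x ∈ A₂, c₂ + c₂ - x ∈ A₂) :
    ‖c₁ - c₂‖ ≤ Metric.hausdorffDist A₁ A₂ := by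
  set d := Metric.hausdorffDist A₁ A₂ with hd_def
  have hne : EMetric.hausdorffEdist A₁ A₂ ≠ ⊤ :=
    Metric.hausdorffEdist_ne_top_of_nonempty_of_bounded h₁ne h₂ne h₁bdd h₂bdd
  have hd0 : 0 ≤ d := Metric.hausdorffDist_nonneg
  obtain ⟨a₀, ha₀⟩ := h₁ne
  refine le_of_forall_pos_le_add fun ε hε => ?_
  have hdlt : d < d + ε := by linarith
  have hde0 : 0 ≤ d + ε := by linarith
  -- one step of the iteration
  have step : ∀ x ∈ A₁, ∃ x' ∈ A₁, ‖x' - x - (2:ℝ) • (c₁ - c₂)‖ ≤ 2 * (d + ε) := by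
    intro x hx
    obtain ⟨y, hy, hxy⟩ := Metric.exists_dist_lt_of_hausdorffDist_lt hx hdlt hne
    have hy' : c₂ + c₂ - y ∈ A₂ := h₂sym y hy
    obtain ⟨x₁, hx₁, hdist⟩ := Metric.exists_dist_lt_of_hausdorffDist_lt' hy' hdlt hne
    refine ⟨c₁ + c₁ - x₁, h₁sym x₁ hx₁, ?_⟩
    have heq : c₁ + c₁ - x₁ - x - (2:ℝ) • (c₁ - c₂) = ((c₂ + c₂ - y) - x₁) + (y - x) := by
      module
    rw [heq]
    have h1 : ‖(c₂ + c₂ - y) - x₁‖ ≤ d + ε := by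
      rw [norm_sub_rev, ← dist_eq_norm]; exact hdist.le
    have h2 : ‖y - x‖ ≤ d + ε := by
      rw [norm_sub_rev, ← dist_eq_norm]; exact hxy.le
    calc ‖((c₂ + c₂ - y) - x₁) + (y - x)‖ ≤ ‖(c₂ + c₂ - y) - x₁‖ + ‖y - x‖ := norm_add_le _ _
      _ ≤ 2 * (d + ε) := by linarith
  -- the iterated sequence
  have seq : ∀ n : ℕ, ∃ x ∈ A₁, ‖x - a₀ - ((2 * n : ℝ)) • (c₁ - c₂)‖ ≤ 2 * n * (d + ε) := by
    intro n
    induction n with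
    | zero => exact ⟨a₀, ha₀, by simp⟩
    | succ n ih =>
      obtain ⟨x, hx, hb⟩ := ih
      obtain ⟨x', hx', hb'⟩ := step x hx
      refine ⟨x', hx', ?_⟩
      have heq : x' - a₀ - ((2 * (n + 1 : ℕ) : ℝ)) • (c₁ - c₂)
          = (x' - x - (2:ℝ) • (c₁ - c₂)) + (x - a₀ - ((2 * n : ℝ)) • (c₁ - c₂)) := by
        push_cast
        module
      rw [heq]
      calc ‖(x' - x - (2:ℝ) • (c₁ - c₂)) + (x - a₀ - ((2 * n : ℝ)) • (c₁ - c₂))‖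
          ≤ ‖x' - x - (2:ℝ) • (c₁ - c₂)‖ + ‖x - a₀ - ((2 * n : ℝ)) • (c₁ - c₂)‖ :=
            norm_add_le _ _
        _ ≤ 2 * (n + 1 : ℕ) * (d + ε) := by push_cast; linarith
  -- boundedness gives a uniform bound
  have key : ∀ n : ℕ, 2 * (n : ℝ) * ‖c₁ - c₂‖ ≤ Metric.diam A₁ + 2 * n * (d + ε) := by
    intro n
    obtain ⟨x, hx, hb⟩ := seq n
    have hdiam : ‖x - a₀‖ ≤ Metric.diam A₁ := by
      rw [← dist_eq_norm]; exact Metric.dist_le_diam_of_mem h₁bdd hx ha₀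
    have hnorm : ‖((2 * n : ℝ)) • (c₁ - c₂)‖ = 2 * n * ‖c₁ - c₂‖ := by
      rw [norm_smul, Real.norm_eq_abs, abs_of_nonneg (by positivity)]
    have : ‖((2 * n : ℝ)) • (c₁ - c₂)‖ ≤ ‖x - a₀‖ + ‖x - a₀ - ((2 * n : ℝ)) • (c₁ - c₂)‖ := by
      have := norm_sub_le (x - a₀) (x - a₀ - ((2 * n : ℝ)) • (c₁ - c₂))
      simpa using this
    rw [hnorm] at this
    linarith
  -- conclude
  by_contra hcon
  push_neg at hcon
  set δ := ‖c₁ - c₂‖ - (d + ε) with hδ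
  have hδ0 : 0 < δ := by simp only [hδ]; linarith
  obtain ⟨n, hn⟩ := exists_nat_gt (Metric.diam A₁ / (2 * δ))
  have hkn := key n
  have hn' : Metric.diam A₁ < 2 * δ * n := by
    rw [div_lt_iff₀ (by positivity)] at hn
    linarith [hn]
  nlinarith [hkn, hn']
end

section
/- For a Euclidean (Hilbert) space X and β ∈ [0,1), the modulus of squareness satisfies ξ_X(β) = (1 − β²)^{−1/2}. That is, sup{ ‖x − z(x,y)‖ / (‖x‖ − 1) : x, y ∈ X, ‖y‖ ≤ β < 1 < ‖x‖ } = (1 − β²)^{−1/2}, where z(x,y) is the unique point of norm 1 on the segment [x,y]. -/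
set_option maxHeartbeats 1000000
open scoped RealInnerProductSpace
open Topology Filter

lemma key_inner {X : Type*} [NormedAddCommGroup X] [InnerProductSpace ℝ X]
    {β : ℝ} (h1 : β < 1) {z y : X} (hz : ‖z‖ = 1) (hy : ‖y‖ ≤ β) :
    Real.sqrt (1 - β ^ 2) * ‖z - y‖ ≤ ⟪z, z - y⟫ := by
  have h0 : 0 ≤ β := le_trans (norm_nonneg y) hy
  set p : ℝ := ⟪z, y⟫ with hp_def
  have hzy : ⟪z, z - y⟫ = 1 - p := by
    rw [inner_sub_right, real_inner_self_eq_norm_sq, hz]; norm_num; rfl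
  have hp : |p| ≤ β := by
    calc |p| ≤ ‖z‖ * ‖y‖ := abs_real_inner_le_norm z y
    _ = ‖y‖ := by rw [hz, one_mul]
    _ ≤ β := hy
  have hnorm : ‖z - y‖ ^ 2 = 1 - 2 * p + ‖y‖ ^ 2 := by
    rw [norm_sub_sq_real, hz]; ring
  have hq0 : (0:ℝ) ≤ 1 - β ^ 2 := by nlinarith
  have hsq : Real.sqrt (1 - β ^ 2) ^ 2 = 1 - β ^ 2 := Real.sq_sqrt hq0
  have hyb : ‖y‖ ^ 2 ≤ β ^ 2 := by
    have := norm_nonneg y; nlinarith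
  have h2 : (Real.sqrt (1 - β ^ 2) * ‖z - y‖) ^ 2 ≤ (1 - p) ^ 2 := by
    rw [mul_pow, hsq, hnorm]
    nlinarith [sq_nonneg (p - β ^ 2), mul_nonneg hq0 (sub_nonneg.mpr hyb)]
  have h3 : (0:ℝ) ≤ 1 - p := by
    have := (abs_le.mp hp).2; linarith
  have h4 : (0:ℝ) ≤ Real.sqrt (1 - β ^ 2) * ‖z - y‖ :=
    mul_nonneg (Real.sqrt_nonneg _) (norm_nonneg _)
  rw [hzy]
  nlinarith [h2, h3, h4]

lemma upper {X : Type*} [NormedAddCommGroup X] [InnerProductSpace ℝ X]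
    {β : ℝ} (h1 : β < 1) {x y z : X} (hy : ‖y‖ ≤ β) (hx : 1 < ‖x‖)
    (hseg : z ∈ segment ℝ x y) (hz : ‖z‖ = 1) :
    ‖x - z‖ / (‖x‖ - 1) ≤ 1 / Real.sqrt (1 - β ^ 2) := by
  have h0 : 0 ≤ β := le_trans (norm_nonneg y) hy
  obtain ⟨a, b, ha, hb, hab, hzeq⟩ := hseg
  have ha0 : 0 < a := by
    rcases ha.lt_or_eq with h | h
    · exact h
    · exfalso
      have hb1 : b = 1 := by linarith
      have : z = y := by rw [← hzeq, ← h, hb1]; simp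
      rw [this] at hz; rw [hz] at hy; linarith
  have hab' : a = 1 - b := by linarith
  have hxz : x - z = b • (x - y) := by
    rw [← hzeq, hab']; module
  have hzy : z - y = a • (x - y) := by
    rw [← hzeq, hab']; module
  set w := x - y with hw_def
  have hkey := key_inner h1 hz hy
  rw [hzy] at hkey
  rw [norm_smul, real_inner_smul_right] at hkey
  rw [Real.norm_eq_abs, abs_of_pos ha0] at hkey
  have hkey2 : Real.sqrt (1 - β ^ 2) * ‖w‖ ≤ ⟪z, w⟫ := by
    have := hkey
    rw [mul_comm a ‖w‖, ← mul_assoc] at this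
    exact le_of_mul_le_mul_right (by linarith [this]) ha0
  have hxeq : x = z + b • w := by rw [← hxz]; abel
  have hxsq : ‖x‖ ^ 2 = 1 + 2 * (b * ⟪z, w⟫) + b ^ 2 * ‖w‖ ^ 2 := by
    rw [hxeq, norm_add_sq_real, hz, real_inner_smul_right, norm_smul]
    rw [Real.norm_eq_abs, abs_of_nonneg hb]; ring
  have hq0 : (0:ℝ) < 1 - β ^ 2 := by nlinarith
  set r := Real.sqrt (1 - β ^ 2) with hr_def
  have hr0 : 0 < r := Real.sqrt_pos.mpr hq0
  have hr1 : r ≤ 1 := Real.sqrt_le_one.mpr (by nlinarith)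
  have hrsq : r ^ 2 = 1 - β ^ 2 := Real.sq_sqrt hq0.le
  have hwn : 0 ≤ ‖w‖ := norm_nonneg _
  have hlow : (1 + r * (b * ‖w‖)) ^ 2 ≤ ‖x‖ ^ 2 := by
    rw [hxsq]
    nlinarith [mul_le_mul_of_nonneg_left hkey2 hb,
      mul_nonneg (mul_nonneg (sq_nonneg b) (sq_nonneg ‖w‖)) (sub_nonneg.mpr (by nlinarith : r^2 ≤ 1))]
  have hpos : (0:ℝ) ≤ 1 + r * (b * ‖w‖) := by positivity
  have hxlow : 1 + r * (b * ‖w‖) ≤ ‖x‖ := by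
    nlinarith [norm_nonneg x]
  have hxz' : ‖x - z‖ = b * ‖w‖ := by
    rw [hxz, norm_smul, Real.norm_eq_abs, abs_of_nonneg hb]
  rw [div_le_div_iff₀ (by linarith) hr0, hxz', one_mul]
  nlinarith

lemma ortho_pair {X : Type*} [NormedAddCommGroup X] [InnerProductSpace ℝ X]
    (hdim : 2 ≤ Module.rank ℝ X) :
    ∃ u v : X, ‖u‖ = 1 ∧ ‖v‖ = 1 ∧ ⟪u, v⟫ = 0 := by
  have hnt : Nontrivial X := by
    rw [← rank_pos_iff_nontrivial (R := ℝ)]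
    exact lt_of_lt_of_le (by norm_num) hdim
  obtain ⟨x₀, hx₀⟩ := exists_ne (0 : X)
  have hKtop : (ℝ ∙ x₀) ≠ ⊤ := by
    intro h
    have h1 : Module.rank ℝ ↥(ℝ ∙ x₀) ≤ 1 := by
      simpa using rank_span_le (R := ℝ) ({x₀} : Set X)
    rw [h, rank_top] at h1
    exact absurd (hdim.trans h1) (by norm_num)
  have hbot : (ℝ ∙ x₀)ᗮ ≠ ⊥ := by
    simp only [ne_eq, Submodule.orthogonal_eq_bot_iff]
    exact hKtop
  obtain ⟨v₀, hv₀mem, hv₀⟩ := Submodule.exists_mem_ne_zero_of_ne_bot hbot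
  have hinner : ⟪x₀, v₀⟫ = 0 :=
    hv₀mem x₀ (Submodule.mem_span_singleton_self x₀)
  refine ⟨‖x₀‖⁻¹ • x₀, ‖v₀‖⁻¹ • v₀, ?_, ?_, ?_⟩
  · rw [norm_smul, Real.norm_eq_abs, abs_inv, abs_of_nonneg (norm_nonneg _),
      inv_mul_cancel₀ (norm_ne_zero_iff.mpr hx₀)]
  · rw [norm_smul, Real.norm_eq_abs, abs_inv, abs_of_nonneg (norm_nonneg _),
      inv_mul_cancel₀ (norm_ne_zero_iff.mpr hv₀)]
  · rw [real_inner_smul_left, real_inner_smul_right, hinner]; ring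

/-- **Modulus of squareness of a Euclidean space**: for a real inner product space `X` of
dimension at least `2` and `β ∈ [0,1)`,
`ξ_X(β) = sup { ‖x − z‖/(‖x‖ − 1) : ‖y‖ ≤ β < 1 < ‖x‖, z ∈ [x,y], ‖z‖ = 1 } = (1 − β²)^{-1/2}`. -/
theorem stmt_14 {X : Type*} [NormedAddCommGroup X] [InnerProductSpace ℝ X]
    (hdim : 2 ≤ Module.rank ℝ X) (β : ℝ) (h0 : 0 ≤ β) (h1 : β < 1) :
    sSup {ω : ℝ | ∃ x y z : X, ‖y‖ ≤ β ∧ 1 < ‖x‖ ∧ z ∈ segment ℝ x y ∧ ‖z‖ = 1 ∧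
        ω = ‖x - z‖ / (‖x‖ - 1)} = 1 / Real.sqrt (1 - β ^ 2) := by
  have hq0 : (0:ℝ) < 1 - β ^ 2 := by nlinarith
  have hr0 : 0 < Real.sqrt (1 - β ^ 2) := Real.sqrt_pos.mpr hq0
  set r := Real.sqrt (1 - β ^ 2) with hr_def
  have hrsq : r ^ 2 = 1 - β ^ 2 := Real.sq_sqrt hq0.le
  obtain ⟨u, v, hu, hv, huv⟩ := ortho_pair hdim
  have hnorm2 : ∀ aa bb : ℝ, ‖aa • u + bb • v‖ ^ 2 = aa ^ 2 + bb ^ 2 := by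
    intro aa bb
    rw [norm_add_sq_real, real_inner_smul_left, real_inner_smul_right, huv,
      norm_smul, norm_smul, Real.norm_eq_abs, Real.norm_eq_abs, hu, hv]
    rw [mul_pow, mul_pow, sq_abs, sq_abs]; ring
  set y : X := β ^ 2 • u + (β * r) • v with hy_def
  have hy_norm : ‖y‖ = β := by
    have h2 : ‖y‖ ^ 2 = β ^ 2 := by
      rw [hy_def, hnorm2]; linear_combination β ^ 2 * hrsq
    calc ‖y‖ = Real.sqrt (‖y‖ ^ 2) := (Real.sqrt_sq (norm_nonneg y)).symm
    _ = Real.sqrt (β ^ 2) := by rw [h2]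
    _ = β := Real.sqrt_sq h0
  set xx : ℝ → X := fun s => (1 + s * (1 - β ^ 2)) • u + (-(s * β * r)) • v with hxx_def
  have hx_normsq : ∀ s : ℝ, ‖xx s‖ ^ 2 = 1 + (1 - β ^ 2) * s * (2 + s) := by
    intro s
    rw [hxx_def]
    rw [hnorm2]
    linear_combination (s ^ 2 * β ^ 2) * hrsq
  have hx_gt1 : ∀ s : ℝ, 0 < s → 1 < ‖xx s‖ := by
    intro s hs
    nlinarith [hx_normsq s, norm_nonneg (xx s), mul_pos (mul_pos hq0 hs) (by linarith : (0:ℝ) < 2 + s)]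
  have hx_norm : ∀ s : ℝ, ‖xx s‖ = Real.sqrt (1 + (1 - β ^ 2) * s * (2 + s)) := by
    intro s
    rw [← hx_normsq s, Real.sqrt_sq (norm_nonneg _)]
  have hxu_norm : ∀ s : ℝ, 0 < s → ‖xx s - u‖ = s * r := by
    intro s hs
    have hd : xx s - u = (s * (1 - β ^ 2)) • u + (-(s * β * r)) • v := by
      rw [hxx_def]; module
    have h2 : ‖xx s - u‖ ^ 2 = (s * r) ^ 2 := by
      rw [hd, hnorm2]
      linear_combination (s ^ 2 * (β ^ 2 - 1)) * hrsq
    calc ‖xx s - u‖ = Real.sqrt (‖xx s - u‖ ^ 2) := (Real.sqrt_sq (norm_nonneg _)).symm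
    _ = Real.sqrt ((s * r) ^ 2) := by rw [h2]
    _ = s * r := Real.sqrt_sq (by positivity)
  have hseg : ∀ s : ℝ, 0 < s → u ∈ segment ℝ (xx s) y := by
    intro s hs
    refine ⟨1 / (1 + s), s / (1 + s), by positivity, by positivity, by field_simp, ?_⟩
    rw [hxx_def, hy_def]
    match_scalars
    · field_simp; ring
    · field_simp; ring
  have hmem : ∀ s : ℝ, 0 < s → ‖xx s - u‖ / (‖xx s‖ - 1) ∈
      {ω : ℝ | ∃ x y z : X, ‖y‖ ≤ β ∧ 1 < ‖x‖ ∧ z ∈ segment ℝ x y ∧ ‖z‖ = 1 ∧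
        ω = ‖x - z‖ / (‖x‖ - 1)} := by
    intro s hs
    exact ⟨xx s, y, u, hy_norm.le, hx_gt1 s hs, hseg s hs, hu, rfl⟩
  have hbdd : BddAbove {ω : ℝ | ∃ x y z : X, ‖y‖ ≤ β ∧ 1 < ‖x‖ ∧ z ∈ segment ℝ x y ∧ ‖z‖ = 1 ∧
      ω = ‖x - z‖ / (‖x‖ - 1)} := by
    refine ⟨1 / r, ?_⟩
    rintro ω ⟨x', y', z', hy', hx', hseg', hz', rfl⟩
    exact upper h1 hy' hx' hseg' hz'
  have hne : {ω : ℝ | ∃ x y z : X, ‖y‖ ≤ β ∧ 1 < ‖x‖ ∧ z ∈ segment ℝ x y ∧ ‖z‖ = 1 ∧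
      ω = ‖x - z‖ / (‖x‖ - 1)}.Nonempty := ⟨_, hmem 1 one_pos⟩
  refine le_antisymm (csSup_le hne ?_) ?_
  · rintro ω ⟨x', y', z', hy', hx', hseg', hz', rfl⟩
    exact upper h1 hy' hx' hseg' hz'
  · set g : ℝ → ℝ := fun s => r * (Real.sqrt (1 + (1 - β ^ 2) * s * (2 + s)) + 1) /
      ((1 - β ^ 2) * (2 + s)) with hg_def
    have hg0 : g 0 = 1 / r := by
      rw [hg_def]
      simp only [mul_zero, zero_mul, add_zero, Real.sqrt_one]
      rw [div_eq_div_iff (by positivity) hr0.ne']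
      linear_combination 2 * hrsq
    have hgt : Tendsto g (𝓝[>] (0:ℝ)) (𝓝 (1 / r)) := by
      rw [← hg0]
      refine Tendsto.mono_left ?_ nhdsWithin_le_nhds
      apply ContinuousAt.tendsto
      apply ContinuousAt.div
      · fun_prop
      · fun_prop
      · simp only [add_zero]
        exact (mul_pos hq0 (by norm_num : (0:ℝ) < 2)).ne'
    have hFg : ∀ s ∈ Set.Ioi (0:ℝ), ‖xx s - u‖ / (‖xx s‖ - 1) = g s := by
      intro s hs
      have hs' : (0:ℝ) < s := hs
      rw [hxu_norm s hs', hx_norm s, hg_def]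
      have hD1 : 1 < 1 + (1 - β ^ 2) * s * (2 + s) := by
        have := mul_pos (mul_pos hq0 hs') (show (0:ℝ) < 2 + s by linarith)
        linarith
      have hsD : Real.sqrt (1 + (1 - β ^ 2) * s * (2 + s)) *
          Real.sqrt (1 + (1 - β ^ 2) * s * (2 + s)) = 1 + (1 - β ^ 2) * s * (2 + s) :=
        Real.mul_self_sqrt (by linarith)
      have h1' : 1 < Real.sqrt (1 + (1 - β ^ 2) * s * (2 + s)) := by
        nlinarith [Real.sqrt_nonneg (1 + (1 - β ^ 2) * s * (2 + s))]
      rw [div_eq_div_iff (by linarith) (by positivity)]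
      linear_combination (-r) * hsD
    have hFt : Tendsto (fun s => ‖xx s - u‖ / (‖xx s‖ - 1)) (𝓝[>] (0:ℝ)) (𝓝 (1 / r)) :=
      hgt.congr' (Filter.eventuallyEq_of_mem self_mem_nhdsWithin
        (fun s hs => (hFg s hs).symm))
    exact le_of_tendsto hFt (Filter.eventually_of_mem self_mem_nhdsWithin
      (fun s hs => le_csSup hbdd (hmem s hs)))
end

section
/- For every Banach space X and every β ∈ [0,1), the modulus of squareness satisfies ξ_X(β) ≤ (1 + β)/(1 − β). That is, if ‖y‖ ≤ β < 1 < ‖x‖ and z is the unique point of norm 1 on the segment [x,y], then ‖x − z‖ ≤ ((1+β)/(1−β))·(‖x‖ − 1). -/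
/-- **Upper bound for the modulus of squareness of a Banach space** (Przesławski–Yost):
for every `β ∈ [0,1)`, if `‖y‖ ≤ β < 1 < ‖x‖` and `z` is a point of norm `1` on the segment
`[x,y]`, then `‖x − z‖ ≤ ((1+β)/(1−β))·(‖x‖ − 1)`; hence `ξ_X(β) ≤ (1+β)/(1−β)`. -/
theorem stmt_15 {X : Type*} [NormedAddCommGroup X] [NormedSpace ℝ X]
    (β : ℝ) (h0 : 0 ≤ β) (h1 : β < 1)
    (x y z : X) (hy : ‖y‖ ≤ β) (hx : 1 < ‖x‖) (hz : z ∈ segment ℝ x y) (hz1 : ‖z‖ = 1) :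
    ‖x - z‖ ≤ (1 + β) / (1 - β) * (‖x‖ - 1) := by
  obtain ⟨a, b, ha, hb, hab, hzdef⟩ := hz
  have hβ1 : (0:ℝ) < 1 - β := by linarith
  -- key inequality 1 ≤ a‖x‖ + bβ
  have key : 1 ≤ a * ‖x‖ + b * β := by
    have h := norm_add_le (a • x) (b • y)
    rw [hzdef, hz1, norm_smul, norm_smul, Real.norm_of_nonneg ha,
      Real.norm_of_nonneg hb] at h
    nlinarith [mul_le_mul_of_nonneg_left hy hb]
  have hxz : x - z = b • (x - y) := by
    rw [← hzdef]; rw [show a = 1 - b by linarith]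
    module
  have hzy : z - y = a • (x - y) := by
    rw [← hzdef]; rw [show b = 1 - a by linarith]
    module
  have h1' : ‖x - z‖ = b * ‖x - y‖ := by
    rw [hxz, norm_smul, Real.norm_of_nonneg hb]
  have h2' : a * ‖x - y‖ ≤ 1 + β := by
    have : ‖z - y‖ ≤ ‖z‖ + ‖y‖ := norm_sub_le z y
    rw [hzy, norm_smul, Real.norm_of_nonneg ha, hz1] at this
    linarith
  rw [h1', div_mul_eq_mul_div, le_div_iff₀ hβ1]
  have hd : (0:ℝ) ≤ ‖x - y‖ := norm_nonneg _
  nlinarith [mul_nonneg hb hd, mul_nonneg (mul_nonneg hb hd) h0,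
    mul_le_mul_of_nonneg_right key (mul_nonneg hb hd),
    mul_le_mul_of_nonneg_right h2' (mul_nonneg hb (by linarith : (0:ℝ) ≤ ‖x‖ - β))]
end

section
/- Let X be a two-dimensional Banach space, C, C₁, C₂ ⊆ X convex sets, r > 0, and suppose C₁ ∩ C₂ ∩ (C + r·B) ≠ ∅, where B is the closed unit ball. Then for every L > 1 and every ε > 0: [C₁ ∩ C₂ + (Lr + ε)B] ∩ [(C₁ + rB) ∩ C + εB] ∩ [(C₂ + rB) ∩ C + εB] ⊆ (C₁ ∩ C₂ + Lr·B) ∩ C + θ(L)·ε·B, with θ(L) = (3L+1)/(L−1). -/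
open Pointwise

set_option maxHeartbeats 1000000 in
/-- **Proposition (P-F3)**: let `X` be a two-dimensional Banach space, `C, C₁, C₂ ⊆ X`
convex closed sets, `r > 0` with `C₁ ∩ C₂ ∩ (C + rB) ≠ ∅`. Then for every `L > 1`, `ε > 0`:
`[C₁∩C₂ + (Lr+ε)B] ∩ [(C₁+rB)∩C + εB] ∩ [(C₂+rB)∩C + εB] ⊆ (C₁∩C₂ + LrB) ∩ C + θ(L)εB`
with `θ(L) = (3L+1)/(L−1)`. -/
theorem stmt_18 {X : Type*} [NormedAddCommGroup X] [NormedSpace ℝ X]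
    (hdim : Module.finrank ℝ X = 2)
    (C C₁ C₂ : Set X) (hC : Convex ℝ C) (hC₁ : Convex ℝ C₁) (hC₂ : Convex ℝ C₂)
    (hCcl : IsClosed C) (hC₁cl : IsClosed C₁) (hC₂cl : IsClosed C₂)
    (r : ℝ) (hr : 0 < r)
    (hne : (C₁ ∩ C₂ ∩ (C + Metric.closedBall (0 : X) r)).Nonempty)
    (L ε : ℝ) (hL : 1 < L) (hε : 0 < ε) :
    ((C₁ ∩ C₂) + Metric.closedBall (0 : X) (L * r + ε)) ∩
        (((C₁ + Metric.closedBall (0 : X) r) ∩ C) + Metric.closedBall (0 : X) ε) ∩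
        (((C₂ + Metric.closedBall (0 : X) r) ∩ C) + Metric.closedBall (0 : X) ε) ⊆
      (((C₁ ∩ C₂) + Metric.closedBall (0 : X) (L * r)) ∩ C) +
        Metric.closedBall (0 : X) ((3 * L + 1) / (L - 1) * ε) := by
  have hfd : FiniteDimensional ℝ X := FiniteDimensional.of_finrank_pos (by rw [hdim]; norm_num)
  rintro x ⟨⟨h1, h2⟩, h3⟩
  obtain ⟨a, ⟨haC₁, haC₂⟩, u, hu, hau⟩ := Set.mem_add.1 h1
  obtain ⟨b, ⟨hbC₁r, hbC⟩, v, hv, hbv⟩ := Set.mem_add.1 h2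
  obtain ⟨c, ⟨hcC₂r, hcC⟩, s, hs, hcs⟩ := Set.mem_add.1 h3
  obtain ⟨b₁, hb₁, q₁, hq₁, hb₁q⟩ := Set.mem_add.1 hbC₁r
  obtain ⟨c₂, hc₂, q₂, hq₂, hc₂q⟩ := Set.mem_add.1 hcC₂r
  obtain ⟨z, ⟨hzC₁, hzC₂⟩, hzCr⟩ := hne
  rw [Set.mem_add] at hzCr
  obtain ⟨z', hz', p, hp, hz'p⟩ := hzCr
  rw [mem_closedBall_zero_iff] at hu hv hs hq₁ hq₂ hp
  -- norms of distances from x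
  have hrL : r ≤ L * r := le_mul_of_one_le_left hr.le hL.le
  have hxa : ‖x - a‖ ≤ L * r + ε := by
    rw [show x - a = u by rw [← hau]; abel]; exact hu
  have hxb : ‖x - b‖ ≤ ε := by
    rw [show x - b = v by rw [← hbv]; abel]; exact hv
  have hxc : ‖x - c‖ ≤ ε := by
    rw [show x - c = s by rw [← hcs]; abel]; exact hs
  -- Helly: the four sets C₁, C₂, C + rB, closedBall x (L*r+ε)
  set F : Fin 4 → Set X :=
    ![C₁, C₂, C + Metric.closedBall (0 : X) r, Metric.closedBall x (L * r + ε)] with hF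
  have hconv : ∀ i ∈ (Finset.univ : Finset (Fin 4)), Convex ℝ (F i) := by
    intro i _
    fin_cases i
    · exact hC₁
    · exact hC₂
    · exact hC.add (convex_closedBall _ _)
    · exact convex_closedBall _ _
  have htriple : ∀ i : Fin 4, ∃ w, ∀ j : Fin 4, j ≠ i → w ∈ F j := by
    intro i
    fin_cases i
    · -- miss C₁ : use c₂
      refine ⟨c₂, ?_⟩
      intro j hj
      fin_cases j
      · exact absurd rfl hj
      · exact hc₂
      · exact Set.mem_add.2 ⟨c, hcC, -q₂, by
          rwa [mem_closedBall_zero_iff, norm_neg], by rw [← hc₂q]; abel⟩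
      · show c₂ ∈ Metric.closedBall x (L * r + ε)
        rw [Metric.mem_closedBall, dist_eq_norm,
          show c₂ - x = -(x - c) - q₂ by rw [← hc₂q]; abel]
        calc ‖-(x - c) - q₂‖ ≤ ‖-(x-c)‖ + ‖q₂‖ := norm_sub_le _ _
          _ ≤ ε + r := by rw [norm_neg]; exact add_le_add hxc hq₂
          _ ≤ L * r + ε := by linarith
    · -- miss C₂ : use b₁
      refine ⟨b₁, ?_⟩
      intro j hj
      fin_cases j
      · exact hb₁
      · exact absurd rfl hj
      · exact Set.mem_add.2 ⟨b, hbC, -q₁, by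
          rwa [mem_closedBall_zero_iff, norm_neg], by rw [← hb₁q]; abel⟩
      · show b₁ ∈ Metric.closedBall x (L * r + ε)
        rw [Metric.mem_closedBall, dist_eq_norm,
          show b₁ - x = -(x - b) - q₁ by rw [← hb₁q]; abel]
        calc ‖-(x - b) - q₁‖ ≤ ‖-(x-b)‖ + ‖q₁‖ := norm_sub_le _ _
          _ ≤ ε + r := by rw [norm_neg]; exact add_le_add hxb hq₁
          _ ≤ L * r + ε := by linarith
    · -- miss C + rB : use a
      refine ⟨a, ?_⟩
      intro j hj
      fin_cases j
      · exact haC₁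
      · exact haC₂
      · exact absurd rfl hj
      · show a ∈ Metric.closedBall x (L * r + ε)
        rw [Metric.mem_closedBall, dist_eq_norm, ← norm_neg, neg_sub]; exact hxa
    · -- miss ball : use z
      refine ⟨z, ?_⟩
      intro j hj
      fin_cases j
      · exact hzC₁
      · exact hzC₂
      · exact Set.mem_add.2 ⟨z', hz', p, mem_closedBall_zero_iff.2 hp, hz'p⟩
      · exact absurd rfl hj
  have hHelly : (⋂ i ∈ (Finset.univ : Finset (Fin 4)), F i).Nonempty := by
    apply Convex.helly_theorem' hconv
    intro I _ hIcard
    have hIne : I ≠ Finset.univ := by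
      intro h
      rw [h, hdim] at hIcard
      simp [Finset.card_univ] at hIcard
    obtain ⟨i, _, hiI⟩ := Finset.exists_of_ssubset (Finset.ssubset_univ_iff.2 hIne)
    obtain ⟨w, hw⟩ := htriple i
    exact ⟨w, Set.mem_biInter fun j hj => hw j (fun h => hiI (h ▸ hj))⟩
  obtain ⟨w, hw⟩ := hHelly
  have hwC₁ : w ∈ C₁ := Set.mem_iInter₂.1 hw 0 (Finset.mem_univ _)
  have hwC₂ : w ∈ C₂ := Set.mem_iInter₂.1 hw 1 (Finset.mem_univ _)
  have hwCr : w ∈ C + Metric.closedBall (0 : X) r :=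
    Set.mem_iInter₂.1 hw 2 (Finset.mem_univ _)
  have hwx : ‖w - x‖ ≤ L * r + ε := by
    have h4 : w ∈ Metric.closedBall x (L * r + ε) :=
      Set.mem_iInter₂.1 hw 3 (Finset.mem_univ _)
    rwa [Metric.mem_closedBall, dist_eq_norm] at h4
  obtain ⟨w', hw', p', hp', hw'p⟩ := Set.mem_add.1 hwCr
  rw [mem_closedBall_zero_iff] at hp'
  -- the convex combination
  set t : ℝ := 2 * ε / ((L - 1) * r + 2 * ε) with ht
  have hD : 0 < (L - 1) * r + 2 * ε := by nlinarith
  have ht0 : 0 < t := by positivity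
  have ht1 : t < 1 := by
    rw [ht, div_lt_one hD]; nlinarith
  have harith1 : (1 - t) * (L * r + 2 * ε) + t * r = L * r := by
    rw [ht]; field_simp; ring
  have harith3 : t * (L * r + r + 2 * ε) ≤ (2 * L + 2) / (L - 1) * ε := by
    rw [ht, div_mul_eq_mul_div, div_mul_eq_mul_div, div_le_div_iff₀ hD (by linarith)]
    nlinarith [mul_pos hε hε, sq_nonneg ε]
  set y : X := (1 - t) • b + t • w' with hy
  have hyC : y ∈ C := hC hbC hw' (by linarith) ht0.le (by ring)
  set y' : X := (1 - t) • a + t • w with hy'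
  have hy'C₁ : y' ∈ C₁ := hC₁ haC₁ hwC₁ (by linarith) ht0.le (by ring)
  have hy'C₂ : y' ∈ C₂ := hC₂ haC₂ hwC₂ (by linarith) ht0.le (by ring)
  have hba : ‖b - a‖ ≤ L * r + 2 * ε := by
    calc ‖b - a‖ = ‖-(x - b) + (x - a)‖ := by rw [neg_sub]; congr 1; abel
      _ ≤ ‖-(x - b)‖ + ‖x - a‖ := norm_add_le _ _
      _ ≤ ε + (L * r + ε) := by rw [norm_neg]; exact add_le_add hxb hxa
      _ = L * r + 2 * ε := by ring
  have hww' : ‖w' - w‖ ≤ r := by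
    rw [show w' - w = -p' by rw [← hw'p]; abel, norm_neg]; exact hp'
  have hyy' : ‖y - y'‖ ≤ L * r := by
    have h1 : y - y' = (1 - t) • (b - a) + t • (w' - w) := by
      rw [hy, hy', smul_sub, smul_sub]; abel
    calc ‖y - y'‖ ≤ ‖(1 - t) • (b - a)‖ + ‖t • (w' - w)‖ := by
          rw [h1]; exact norm_add_le _ _
      _ = (1 - t) * ‖b - a‖ + t * ‖w' - w‖ := by
          rw [norm_smul, norm_smul, Real.norm_eq_abs, Real.norm_eq_abs,
            abs_of_nonneg (by linarith : (0:ℝ) ≤ 1 - t), abs_of_nonneg ht0.le]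
      _ ≤ (1 - t) * (L * r + 2 * ε) + t * r := by
          gcongr <;> linarith
      _ = L * r := harith1
  have hbw' : ‖b - w'‖ ≤ L * r + r + 2 * ε := by
    calc ‖b - w'‖ = ‖-(x - b) + (-(w - x)) + (-(w' - w))‖ := by congr 1; abel
      _ ≤ ‖-(x - b)‖ + ‖-(w - x)‖ + ‖-(w' - w)‖ :=
          (norm_add_le _ _).trans (by gcongr; exact norm_add_le _ _)
      _ ≤ ε + (L * r + ε) + r := by
          rw [norm_neg, norm_neg, norm_neg]
          exact add_le_add (add_le_add hxb hwx) hww'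
      _ = L * r + r + 2 * ε := by ring
  have hxy : ‖x - y‖ ≤ (3 * L + 1) / (L - 1) * ε := by
    have h1 : x - y = (x - b) + t • (b - w') := by
      rw [hy, smul_sub]
      have : (1 - t) • b = b - t • b := by rw [sub_smul, one_smul]
      rw [this]; abel
    have h2 : ‖x - y‖ ≤ ε + t * (L * r + r + 2 * ε) := by
      calc ‖x - y‖ ≤ ‖x - b‖ + ‖t • (b - w')‖ := by rw [h1]; exact norm_add_le _ _
        _ ≤ ε + t * (L * r + r + 2 * ε) := by
            rw [norm_smul, Real.norm_eq_abs, abs_of_nonneg ht0.le]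
            gcongr
    have h3 := harith3
    have h4 : ε + (2 * L + 2) / (L - 1) * ε = (3 * L + 1) / (L - 1) * ε := by
      field_simp [show L - 1 ≠ 0 by linarith]; ring
    linarith
  refine Set.mem_add.2 ⟨y, ⟨Set.mem_add.2 ⟨y', ⟨hy'C₁, hy'C₂⟩, y - y',
    mem_closedBall_zero_iff.2 hyy', by abel⟩, hyC⟩, x - y,
    mem_closedBall_zero_iff.2 hxy, by abel⟩
end
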